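/- arXiv:1111.0689 — 2 statements merged into one kernel-verified Lean document; each statement's English description precedes it below -/
import Mathlib

section
/- Sum-rate converse for SMDC under the weakened sliding-window reconstruction requirement: Let L ≥ 1, let S_1,…,S_L be mutually independent random variables each taking values in a finite set, let X_1,…,X_L be random variables jointly distributed with them (each taking values in a finite set), and let δ_1,…,δ_L ≥ 0. Suppose that for every α ∈ {1,…,L} and every l ∈ {1,…,L}, H(S_1,…,S_α | X_{W_l^{(α)}}) ≤ δ_α. Then (1/L) · ∑_{l=1}^{L} H(X_l) ≥ ∑_{α=1}^{L} H(S_α)/α − ∑_{α=1}^{L} δ_α/α. -/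
open MeasureTheory ProbabilityTheory

noncomputable def entH {Ω : Type*} [MeasurableSpace Ω] (μ : Measure Ω)
    {S : Type*} [Fintype S] (X : Ω → S) : ℝ :=
  ∑ s : S, Real.negMulLog ((μ (X ⁻¹' {s})).toReal)

noncomputable def condEntH {Ω : Type*} [MeasurableSpace Ω] (μ : Measure Ω)
    {S T : Type*} [Fintype S] [Fintype T] (X : Ω → S) (Y : Ω → T) : ℝ :=
  entH μ (fun ω => (X ω, Y ω)) - entH μ Y

def jointOn {Ω : Type*} {ι : Type*} {S : ι → Type*} (X : ∀ i, Ω → S i) (U : Finset ι) :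
    Ω → ((i : U) → S i) := fun ω i => X i ω

noncomputable def entHset {Ω : Type*} [MeasurableSpace Ω] (μ : Measure Ω)
    {ι : Type*} [DecidableEq ι] {S : ι → Type*} [∀ i, Fintype (S i)]
    (X : ∀ i, Ω → S i) (U : Finset ι) : ℝ :=
  entH μ (jointOn X U)

noncomputable def condEntHset {Ω : Type*} [MeasurableSpace Ω] (μ : Measure Ω)
    {ι : Type*} [DecidableEq ι] {S : ι → Type*} [∀ i, Fintype (S i)]
    (X : ∀ i, Ω → S i) (U A : Finset ι) : ℝ :=
  condEntH μ (jointOn X U) (jointOn X A)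

/-- The sliding window `W_l^{(α)}` (0-indexed: `{⟨l+k⟩ : k < α}` with indices mod `L`). -/
def win (L : ℕ) (l : Fin L) (α : ℕ) : Finset (Fin L) :=
  (Finset.range α).image (fun k => (⟨((l : ℕ) + k) % L, Nat.mod_lt _ l.pos⟩ : Fin L))

/-- The first `α` indices `{0, …, α−1}` of `Fin L` (corresponding to the sources
`S_1, …, S_α` of the paper). -/
def pre (L : ℕ) (α : ℕ) : Finset (Fin L) :=
  Finset.univ.filter (fun i : Fin L => (i : ℕ) < α)

section Tools

variable {Ω : Type*} [MeasurableSpace Ω] {μ : Measure Ω}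
variable {A B C D E : Type*} [Fintype A] [Fintype B] [Fintype C] [Fintype D] [Fintype E]

/-- All fibers (preimages of singletons) are measurable. -/
def FiberMeas (X : Ω → A) : Prop := ∀ a : A, MeasurableSet (X ⁻¹' {a})

lemma FiberMeas.of_meas [MeasurableSpace A] [MeasurableSingletonClass A]
    {X : Ω → A} (h : Measurable X) : FiberMeas X :=
  fun a => h (measurableSet_singleton a)

lemma FiberMeas.pair {X : Ω → A} {Y : Ω → B} (hX : FiberMeas X) (hY : FiberMeas Y) :
    FiberMeas (fun ω => (X ω, Y ω)) := by
  intro p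
  have : (fun ω => (X ω, Y ω)) ⁻¹' {p} = X ⁻¹' {p.1} ∩ Y ⁻¹' {p.2} := by
    ext ω; simp [Prod.ext_iff]
  rw [this]; exact (hX p.1).inter (hY p.2)

lemma FiberMeas.comp {X : Ω → A} (hX : FiberMeas X) (f : A → B) :
    FiberMeas (fun ω => f (X ω)) := by
  intro b
  have : (fun ω => f (X ω)) ⁻¹' {b} = ⋃ a ∈ {a : A | f a = b}, X ⁻¹' {a} := by
    ext ω; simp
  rw [this]
  exact MeasurableSet.biUnion (Set.to_countable _) (fun a _ => hX a)

/-- Fibers partition a measurable set. -/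
lemma fiber_split [IsProbabilityMeasure μ] {X : Ω → A} (hX : FiberMeas X)
    {U : Set Ω} (hU : MeasurableSet U) :
    (μ U).toReal = ∑ a : A, (μ (X ⁻¹' {a} ∩ U)).toReal := by
  rw [← ENNReal.toReal_sum (by intro a _; exact measure_ne_top μ _)]
  congr 1
  rw [← measure_biUnion_finset]
  · congr 1
    ext ω; simp
  · intro a _ b _ hab
    simp only [Function.onFun]
    apply Set.disjoint_left.mpr
    rintro ω ⟨h1, _⟩ ⟨h2, _⟩
    exact hab (h1.symm.trans h2)
  · intro a _; exact (hX a).inter hU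

lemma sum_fiber [IsProbabilityMeasure μ] {X : Ω → A} (hX : FiberMeas X) :
    ∑ a : A, (μ (X ⁻¹' {a})).toReal = 1 := by
  have h := fiber_split (μ := μ) hX MeasurableSet.univ
  simp only [Set.inter_univ] at h
  rw [← h, measure_univ, ENNReal.toReal_one]

lemma fiber_nonneg (X : Ω → A) (a : A) : 0 ≤ (μ (X ⁻¹' {a})).toReal := ENNReal.toReal_nonneg

lemma fiber_le_one [IsProbabilityMeasure μ] (X : Ω → A) (a : A) :
    (μ (X ⁻¹' {a})).toReal ≤ 1 := by
  rw [← ENNReal.toReal_one]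
  exact ENNReal.toReal_mono (by simp) (prob_le_one)

lemma entH_nonneg [IsProbabilityMeasure μ] (X : Ω → A) : 0 ≤ entH μ X := by
  apply Finset.sum_nonneg
  intro a _
  exact Real.negMulLog_nonneg (fiber_nonneg X a) (fiber_le_one X a)

/-- Subadditivity of negMulLog over finite sums. -/
lemma negMulLog_sum_le {ι : Type*} (s : Finset ι) (f : ι → ℝ) (hf : ∀ i ∈ s, 0 ≤ f i) :
    Real.negMulLog (∑ i ∈ s, f i) ≤ ∑ i ∈ s, Real.negMulLog (f i) := by
  classical
  induction s using Finset.induction with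
  | empty => simp [Real.negMulLog]
  | @insert a s' hnot ih =>
    rw [Finset.sum_insert hnot, Finset.sum_insert hnot]
    have h1 : 0 ≤ f a := hf a (Finset.mem_insert_self a s')
    have h2 : 0 ≤ ∑ i ∈ s', f i := Finset.sum_nonneg (fun i hi => hf i (Finset.mem_insert_of_mem hi))
    have key : ∀ x y : ℝ, 0 ≤ x → 0 ≤ y →
        Real.negMulLog (x + y) ≤ Real.negMulLog x + Real.negMulLog y := by
      intro x y hx hy
      rcases eq_or_lt_of_le hx with h | hx'
      · simp [← h, Real.negMulLog]
      rcases eq_or_lt_of_le hy with h | hy'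
      · simp [← h, Real.negMulLog]
      simp only [Real.negMulLog, neg_mul]
      have hxy : (0:ℝ) < x + y := by linarith
      have lx : Real.log x ≤ Real.log (x + y) := Real.log_le_log hx' (by linarith)
      have ly : Real.log y ≤ Real.log (x + y) := Real.log_le_log hy' (by linarith)
      nlinarith
    calc Real.negMulLog (f a + ∑ i ∈ s', f i)
        ≤ Real.negMulLog (f a) + Real.negMulLog (∑ i ∈ s', f i) := key _ _ h1 h2
      _ ≤ _ := by
          have := ih (fun i hi => hf i (Finset.mem_insert_of_mem hi))
          linarith

end Tools

section Tools2

set_option linter.unusedSectionVars false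

variable {Ω : Type*} [MeasurableSpace Ω] {μ : Measure Ω}
variable {A B C D E : Type*} [Fintype A] [Fintype B] [Fintype C] [Fintype D] [Fintype E]

/-- `Y` is a function of `X`. -/
def Det (X : Ω → A) (Y : Ω → B) : Prop := ∃ f : A → B, ∀ ω, Y ω = f (X ω)

/-- `X` and `Y` determine each other. -/
def Cop (X : Ω → A) (Y : Ω → B) : Prop := Det X Y ∧ Det Y X

lemma Det.refl (X : Ω → A) : Det X X := ⟨id, fun _ => rfl⟩

lemma Cop.refl (X : Ω → A) : Cop X X := ⟨Det.refl X, Det.refl X⟩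

lemma Cop.symm {X : Ω → A} {Y : Ω → B} (h : Cop X Y) : Cop Y X := ⟨h.2, h.1⟩

lemma Det.trans {X : Ω → A} {Y : Ω → B} {Z : Ω → C} (h1 : Det X Y) (h2 : Det Y Z) : Det X Z := by
  obtain ⟨f, hf⟩ := h1; obtain ⟨g, hg⟩ := h2
  exact ⟨g ∘ f, fun ω => by simp [hg, hf]⟩

lemma Cop.trans {X : Ω → A} {Y : Ω → B} {Z : Ω → C} (h1 : Cop X Y) (h2 : Cop Y Z) : Cop X Z :=
  ⟨h1.1.trans h2.1, h2.2.trans h1.2⟩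

lemma Cop.pair {X : Ω → A} {Y : Ω → B} {X' : Ω → C} {Y' : Ω → D}
    (h1 : Cop X X') (h2 : Cop Y Y') :
    Cop (fun ω => (X ω, Y ω)) (fun ω => (X' ω, Y' ω)) := by
  obtain ⟨⟨f1, hf1⟩, ⟨g1, hg1⟩⟩ := h1
  obtain ⟨⟨f2, hf2⟩, ⟨g2, hg2⟩⟩ := h2
  exact ⟨⟨fun p => (f1 p.1, f2 p.2), fun ω => by simp [← hf1, ← hf2]⟩,
         ⟨fun p => (g1 p.1, g2 p.2), fun ω => by simp [← hg1, ← hg2]⟩⟩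

/-- Entropy is invariant under mutual determination. -/
lemma entH_congr {X : Ω → A} {Y : Ω → B} (h : Cop X Y) : entH μ X = entH μ Y := by
  classical
  obtain ⟨⟨f, hf⟩, ⟨g, hg⟩⟩ := h
  unfold entH
  rw [← Finset.sum_filter_of_ne (p := fun a => (μ (X ⁻¹' {a})).toReal ≠ 0)
      (by intro a _ h; intro h0; rw [h0] at h; simp [Real.negMulLog] at h),
      ← Finset.sum_filter_of_ne (p := fun b => (μ (Y ⁻¹' {b})).toReal ≠ 0)
      (by intro b _ h; intro h0; rw [h0] at h; simp [Real.negMulLog] at h)]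
  have hfib : ∀ a : A, (X ⁻¹' {a}).Nonempty → X ⁻¹' {a} = Y ⁻¹' {f a} := by
    intro a ⟨ω0, hω0⟩
    simp only [Set.mem_preimage, Set.mem_singleton_iff] at hω0
    ext ω
    simp only [Set.mem_preimage, Set.mem_singleton_iff]
    constructor
    · intro h; rw [hf ω, h]
    · intro h
      have : g (f a) = a := by rw [← hω0, ← hf ω0, ← hg ω0, hω0]
      rw [hg ω, h, this]
  have hfibY : ∀ b : B, (Y ⁻¹' {b}).Nonempty → Y ⁻¹' {b} = X ⁻¹' {g b} := by
    intro b ⟨ω0, hω0⟩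
    simp only [Set.mem_preimage, Set.mem_singleton_iff] at hω0
    ext ω
    simp only [Set.mem_preimage, Set.mem_singleton_iff]
    constructor
    · intro h; rw [hg ω, h]
    · intro h
      have : f (g b) = b := by rw [← hω0, ← hg ω0, ← hf ω0, hω0]
      rw [hf ω, h, this]
  have hne : ∀ a : A, (μ (X ⁻¹' {a})).toReal ≠ 0 → (X ⁻¹' {a}).Nonempty := by
    intro a ha
    by_contra hc
    rw [Set.not_nonempty_iff_eq_empty] at hc
    simp [hc] at ha
  have hneY : ∀ b : B, (μ (Y ⁻¹' {b})).toReal ≠ 0 → (Y ⁻¹' {b}).Nonempty := by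
    intro b hb
    by_contra hc
    rw [Set.not_nonempty_iff_eq_empty] at hc
    simp [hc] at hb
  apply Finset.sum_nbij' (i := f) (j := g)
  · intro a ha
    simp only [Finset.mem_filter, Finset.mem_univ, true_and] at ha ⊢
    rw [← hfib a (hne a ha)]; exact ha
  · intro b hb
    simp only [Finset.mem_filter, Finset.mem_univ, true_and] at hb ⊢
    rw [← hfibY b (hneY b hb)]; exact hb
  · intro a ha
    simp only [Finset.mem_filter, Finset.mem_univ, true_and] at ha
    obtain ⟨ω0, hω0⟩ := hne a ha
    simp only [Set.mem_preimage, Set.mem_singleton_iff] at hω0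
    rw [← hω0, ← hf ω0, ← hg ω0, hω0]
  · intro b hb
    simp only [Finset.mem_filter, Finset.mem_univ, true_and] at hb
    obtain ⟨ω0, hω0⟩ := hneY b hb
    simp only [Set.mem_preimage, Set.mem_singleton_iff] at hω0
    rw [← hω0, ← hg ω0, ← hf ω0, hω0]
  · intro a ha
    simp only [Finset.mem_filter, Finset.mem_univ, true_and] at ha
    rw [hfib a (hne a ha)]

lemma condEntH_congr {X : Ω → A} {Y : Ω → B} {X' : Ω → C} {Y' : Ω → D}
    (h1 : Cop X X') (h2 : Cop Y Y') : condEntH μ X Y = condEntH μ X' Y' := by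
  unfold condEntH
  rw [entH_congr (h1.pair h2), entH_congr h2]

end Tools2

section Tools3

set_option linter.unusedSectionVars false
set_option maxHeartbeats 1000000

variable {Ω : Type*} [MeasurableSpace Ω] {μ : Measure Ω}
variable {A B C D E : Type*} [Fintype A] [Fintype B] [Fintype C] [Fintype D] [Fintype E]

open Real

lemma pointwise_gibbs (q aM bM cM : ℝ) (h0 : 0 ≤ q) (ha : q ≤ aM) (hb : q ≤ bM) (hc : q ≤ cM)
    (ha0 : 0 ≤ aM) (hb0 : 0 ≤ bM) (hc0 : 0 ≤ cM) :
    q - aM * bM / cM ≤ q * Real.log q + q * Real.log cM - q * Real.log aM - q * Real.log bM := by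
  rcases eq_or_lt_of_le h0 with h | hq
  · have : 0 ≤ aM * bM / cM := div_nonneg (mul_nonneg ha0 hb0) hc0
    simp only [← h, zero_mul, zero_sub, sub_zero, add_zero, zero_add]
    linarith
  · have haM : 0 < aM := lt_of_lt_of_le hq ha
    have hbM : 0 < bM := lt_of_lt_of_le hq hb
    have hcM : 0 < cM := lt_of_lt_of_le hq hc
    set r := aM * bM / cM with hr
    have hrpos : 0 < r := div_pos (mul_pos haM hbM) hcM
    have hlog : Real.log (r / q) ≤ r / q - 1 := Real.log_le_sub_one_of_pos (by positivity)
    have hsplit : Real.log (r / q) = Real.log aM + Real.log bM - Real.log cM - Real.log q := by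
      rw [Real.log_div hrpos.ne' hq.ne', hr, Real.log_div (mul_pos haM hbM).ne' hcM.ne',
        Real.log_mul haM.ne' hbM.ne']
    have hmul : q * Real.log (r / q) ≤ q * (r / q - 1) :=
      mul_le_mul_of_nonneg_left hlog h0
    have heq : q * (r / q - 1) = r - q := by field_simp
    rw [heq, hsplit] at hmul
    nlinarith [hmul]

lemma neg_sum_mul {ι : Type*} (s : Finset ι) (f : ι → ℝ) (x : ℝ) :
    -((∑ i ∈ s, f i) * x) = ∑ i ∈ s, -(f i * x) := by
  rw [Finset.sum_mul, ← Finset.sum_neg_distrib]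

lemma swap3 (g : A → B → C → ℝ) :
    ∑ b, ∑ c, ∑ a, g a b c = ∑ a, ∑ b, ∑ c, g a b c := by
  calc ∑ b, ∑ c, ∑ a, g a b c
      = ∑ b, ∑ a, ∑ c, g a b c := Finset.sum_congr rfl (fun b _ => Finset.sum_comm)
    _ = ∑ a, ∑ b, ∑ c, g a b c := Finset.sum_comm

lemma submod_arith (q : A → B → C → ℝ) (hq : ∀ a b c, 0 ≤ q a b c)
    (hsum : ∑ a, ∑ b, ∑ c, q a b c = 1) :
    (∑ a, ∑ b, ∑ c, negMulLog (q a b c)) + (∑ c, negMulLog (∑ a, ∑ b, q a b c))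
      ≤ (∑ a, ∑ c, negMulLog (∑ b, q a b c)) + (∑ b, ∑ c, negMulLog (∑ a, q a b c)) := by
  classical
  have haM0 : ∀ a c, 0 ≤ ∑ b, q a b c := fun a c => Finset.sum_nonneg (fun b _ => hq a b c)
  have hbM0 : ∀ b c, 0 ≤ ∑ a, q a b c := fun b c => Finset.sum_nonneg (fun a _ => hq a b c)
  have hcM0 : ∀ c, 0 ≤ ∑ a, ∑ b, q a b c := fun c => Finset.sum_nonneg (fun a _ => haM0 a c)
  have hq_le_a : ∀ a b c, q a b c ≤ ∑ b', q a b' c := fun a b c =>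
    Finset.single_le_sum (f := fun b => q a b c) (fun b _ => hq a b c) (Finset.mem_univ b)
  have hq_le_b : ∀ a b c, q a b c ≤ ∑ a', q a' b c := fun a b c =>
    Finset.single_le_sum (f := fun a => q a b c) (fun a _ => hq a b c) (Finset.mem_univ a)
  have hq_le_c : ∀ a b c, q a b c ≤ ∑ a', ∑ b', q a' b' c := fun a b c =>
    le_trans (hq_le_a a b c)
      (Finset.single_le_sum (f := fun a => ∑ b', q a b' c) (fun a _ => haM0 a c)
        (Finset.mem_univ a))
  -- marginal expansions as triple sums
  have I1 : ∑ a, ∑ c, negMulLog (∑ b, q a b c)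
      = ∑ a, ∑ b, ∑ c, (-(q a b c * Real.log (∑ b', q a b' c))) := by
    apply Finset.sum_congr rfl
    intro a _
    rw [Finset.sum_comm]
    apply Finset.sum_congr rfl
    intro c _
    rw [negMulLog, neg_mul]
    exact neg_sum_mul _ _ _
  have I2 : ∑ b, ∑ c, negMulLog (∑ a, q a b c)
      = ∑ a, ∑ b, ∑ c, (-(q a b c * Real.log (∑ a', q a' b c))) := by
    rw [← swap3]
    apply Finset.sum_congr rfl
    intro b _
    apply Finset.sum_congr rfl
    intro c _
    rw [negMulLog, neg_mul]
    exact neg_sum_mul _ _ _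
  have I3 : ∑ c, negMulLog (∑ a, ∑ b, q a b c)
      = ∑ a, ∑ b, ∑ c, (-(q a b c * Real.log (∑ a', ∑ b', q a' b' c))) := by
    have step : ∀ c, negMulLog (∑ a, ∑ b, q a b c)
        = ∑ a, ∑ b, (-(q a b c * Real.log (∑ a', ∑ b', q a' b' c))) := by
      intro c
      rw [negMulLog, neg_mul, neg_sum_mul]
      apply Finset.sum_congr rfl
      intro a _
      exact neg_sum_mul _ _ _
    rw [Finset.sum_congr rfl (fun c _ => step c)]
    -- now reorder ∑ c, ∑ a, ∑ b  →  ∑ a, ∑ b, ∑ c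
    calc ∑ c, ∑ a, ∑ b, (-(q a b c * Real.log (∑ a', ∑ b', q a' b' c)))
        = ∑ a, ∑ c, ∑ b, (-(q a b c * Real.log (∑ a', ∑ b', q a' b' c))) := Finset.sum_comm
      _ = ∑ a, ∑ b, ∑ c, (-(q a b c * Real.log (∑ a', ∑ b', q a' b' c))) :=
          Finset.sum_congr rfl (fun a _ => Finset.sum_comm)
  have I4 : ∑ a, ∑ b, ∑ c, negMulLog (q a b c)
      = ∑ a, ∑ b, ∑ c, (-(q a b c * Real.log (q a b c))) := by
    apply Finset.sum_congr rfl; intro a _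
    apply Finset.sum_congr rfl; intro b _
    apply Finset.sum_congr rfl; intro c _
    rw [negMulLog, neg_mul]
  rw [I1, I2, I3, I4]
  -- combine into a single triple sum
  have comb : ∀ f g : A → B → C → ℝ,
      (∑ a, ∑ b, ∑ c, f a b c) + (∑ a, ∑ b, ∑ c, g a b c)
        = ∑ a, ∑ b, ∑ c, (f a b c + g a b c) := by
    intro f g
    rw [← Finset.sum_add_distrib]
    apply Finset.sum_congr rfl; intro a _
    rw [← Finset.sum_add_distrib]
    apply Finset.sum_congr rfl; intro b _
    rw [← Finset.sum_add_distrib]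
  rw [comb, comb]
  set r : A → B → C → ℝ :=
    fun a b c => (∑ b', q a b' c) * (∑ a', q a' b c) / (∑ a', ∑ b', q a' b' c) with hrdef
  have hpoint : ∀ a b c,
      (-(q a b c * Real.log (q a b c)) + -(q a b c * Real.log (∑ a', ∑ b', q a' b' c)))
        ≤ (-(q a b c * Real.log (∑ b', q a b' c)) + -(q a b c * Real.log (∑ a', q a' b c)))
          + (r a b c - q a b c) := by
    intro a b c
    have := pointwise_gibbs (q a b c) (∑ b', q a b' c) (∑ a', q a' b c)
      (∑ a', ∑ b', q a' b' c) (hq a b c) (hq_le_a a b c) (hq_le_b a b c) (hq_le_c a b c)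
      (haM0 a c) (hbM0 b c) (hcM0 c)
    simp only [hrdef]
    linarith
  have swap3c : ∀ g : A → B → C → ℝ,
      ∑ a, ∑ b, ∑ c, g a b c = ∑ c, ∑ a, ∑ b, g a b c := by
    intro g
    calc ∑ a, ∑ b, ∑ c, g a b c
        = ∑ a, ∑ c, ∑ b, g a b c := Finset.sum_congr rfl (fun a _ => Finset.sum_comm)
      _ = ∑ c, ∑ a, ∑ b, g a b c := Finset.sum_comm
  have hrsum : ∑ a, ∑ b, ∑ c, r a b c ≤ 1 := by
    rw [swap3c]
    have percc : ∀ c, ∑ a, ∑ b, r a b c ≤ ∑ a, ∑ b, q a b c := by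
      intro c
      have hfact : ∑ a, ∑ b, r a b c
          = (∑ a, ∑ b', q a b' c) * (∑ b, ∑ a', q a' b c) / (∑ a', ∑ b', q a' b' c) := by
        simp only [hrdef]
        have h1 : ∀ a, ∑ b, (∑ b', q a b' c) * (∑ a', q a' b c) / (∑ a', ∑ b', q a' b' c)
            = ((∑ b', q a b' c) * (∑ b, ∑ a', q a' b c)) / (∑ a', ∑ b', q a' b' c) := by
          intro a
          rw [← Finset.sum_div, ← Finset.mul_sum]
        rw [Finset.sum_congr rfl (fun a _ => h1 a), ← Finset.sum_div, ← Finset.sum_mul]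
      rw [hfact]
      have hbb : ∑ b, ∑ a', q a' b c = ∑ a', ∑ b, q a' b c := Finset.sum_comm
      rw [hbb]
      rcases eq_or_lt_of_le (hcM0 c) with h | h
      · rw [← h]
        simp
      · rw [mul_div_assoc, div_self h.ne', mul_one]
    calc ∑ c, ∑ a, ∑ b, r a b c ≤ ∑ c, ∑ a, ∑ b, q a b c :=
          Finset.sum_le_sum (fun c _ => percc c)
      _ = ∑ a, ∑ b, ∑ c, q a b c := (swap3c q).symm
      _ = 1 := hsum
  have step1 : ∑ a, ∑ b, ∑ c,
      (-(q a b c * Real.log (q a b c)) + -(q a b c * Real.log (∑ a', ∑ b', q a' b' c)))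
      ≤ ∑ a, ∑ b, ∑ c,
        ((-(q a b c * Real.log (∑ b', q a b' c)) + -(q a b c * Real.log (∑ a', q a' b c)))
          + (r a b c - q a b c)) := by
    apply Finset.sum_le_sum; intro a _
    apply Finset.sum_le_sum; intro b _
    apply Finset.sum_le_sum; intro c _
    exact hpoint a b c
  have step2 : ∑ a, ∑ b, ∑ c,
        ((-(q a b c * Real.log (∑ b', q a b' c)) + -(q a b c * Real.log (∑ a', q a' b c)))
          + (r a b c - q a b c))
      = (∑ a, ∑ b, ∑ c,
          (-(q a b c * Real.log (∑ b', q a b' c)) + -(q a b c * Real.log (∑ a', q a' b c))))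
        + ((∑ a, ∑ b, ∑ c, r a b c) - (∑ a, ∑ b, ∑ c, q a b c)) := by
    rw [← comb]
    congr 1
    have : ∀ f g : A → B → C → ℝ,
        (∑ a, ∑ b, ∑ c, f a b c) - (∑ a, ∑ b, ∑ c, g a b c)
          = ∑ a, ∑ b, ∑ c, (f a b c - g a b c) := by
      intro f g
      rw [← Finset.sum_sub_distrib]
      apply Finset.sum_congr rfl; intro a _
      rw [← Finset.sum_sub_distrib]
      apply Finset.sum_congr rfl; intro b _
      rw [← Finset.sum_sub_distrib]
    rw [this]
  rw [step2] at step1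
  rw [hsum] at step1
  linarith

end Tools3

section Tools4

set_option linter.unusedSectionVars false
set_option maxHeartbeats 1000000

variable {Ω : Type*} [MeasurableSpace Ω] {μ : Measure Ω}
variable {A B C D E : Type*} [Fintype A] [Fintype B] [Fintype C] [Fintype D] [Fintype E]

open Real

lemma pair_fiber (X : Ω → A) (Y : Ω → B) (a : A) (b : B) :
    (fun ω => (X ω, Y ω)) ⁻¹' {(a, b)} = X ⁻¹' {a} ∩ Y ⁻¹' {b} := by
  ext ω; simp [Prod.ext_iff]

lemma entH_pair_expand (X : Ω → A) (Y : Ω → B) :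
    entH μ (fun ω => (X ω, Y ω))
      = ∑ a, ∑ b, negMulLog ((μ (X ⁻¹' {a} ∩ Y ⁻¹' {b})).toReal) := by
  unfold entH
  rw [Fintype.sum_prod_type]
  apply Finset.sum_congr rfl; intro a _
  apply Finset.sum_congr rfl; intro b _
  rw [pair_fiber]

lemma entH_snd_le [IsProbabilityMeasure μ] {X : Ω → A} {Y : Ω → B}
    (hX : FiberMeas X) (hY : FiberMeas Y) :
    entH μ Y ≤ entH μ (fun ω => (X ω, Y ω)) := by
  rw [entH_pair_expand]
  unfold entH
  have hmarg : ∀ b, (μ (Y ⁻¹' {b})).toReal = ∑ a, (μ (X ⁻¹' {a} ∩ Y ⁻¹' {b})).toReal :=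
    fun b => fiber_split hX (hY b)
  calc ∑ b, negMulLog ((μ (Y ⁻¹' {b})).toReal)
      = ∑ b, negMulLog (∑ a, (μ (X ⁻¹' {a} ∩ Y ⁻¹' {b})).toReal) := by
        exact Finset.sum_congr rfl (fun b _ => by rw [hmarg b])
    _ ≤ ∑ b, ∑ a, negMulLog ((μ (X ⁻¹' {a} ∩ Y ⁻¹' {b})).toReal) :=
        Finset.sum_le_sum (fun b _ => negMulLog_sum_le _ _ (fun a _ => ENNReal.toReal_nonneg))
    _ = ∑ a, ∑ b, negMulLog ((μ (X ⁻¹' {a} ∩ Y ⁻¹' {b})).toReal) := Finset.sum_comm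

lemma condEntH_nonneg [IsProbabilityMeasure μ] {X : Ω → A} {Y : Ω → B}
    (hX : FiberMeas X) (hY : FiberMeas Y) : 0 ≤ condEntH μ X Y :=
  sub_nonneg.mpr (entH_snd_le hX hY)

lemma swap3' (g : A → B → C → ℝ) :
    ∑ a, ∑ b, ∑ c, g a b c = ∑ c, ∑ a, ∑ b, g a b c := by
  calc ∑ a, ∑ b, ∑ c, g a b c
      = ∑ a, ∑ c, ∑ b, g a b c := Finset.sum_congr rfl (fun a _ => Finset.sum_comm)
    _ = ∑ c, ∑ a, ∑ b, g a b c := Finset.sum_comm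

/-- Conditioning on more reduces conditional entropy (submodularity). -/
lemma condEntH_pair_cond_le [IsProbabilityMeasure μ] {X : Ω → A} {Y : Ω → B} {Z : Ω → C}
    (hX : FiberMeas X) (hY : FiberMeas Y) (hZ : FiberMeas Z) :
    condEntH μ X (fun ω => (Y ω, Z ω)) ≤ condEntH μ X Z := by
  classical
  set q : A → B → C → ℝ := fun a b c => (μ (X ⁻¹' {a} ∩ Y ⁻¹' {b} ∩ Z ⁻¹' {c})).toReal with hqdef
  have hq : ∀ a b c, 0 ≤ q a b c := fun _ _ _ => ENNReal.toReal_nonneg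
  have e1 : entH μ (fun ω => (X ω, (Y ω, Z ω))) = ∑ a, ∑ b, ∑ c, negMulLog (q a b c) := by
    unfold entH
    rw [Fintype.sum_prod_type]
    apply Finset.sum_congr rfl; intro a _
    rw [Fintype.sum_prod_type]
    apply Finset.sum_congr rfl; intro b _
    apply Finset.sum_congr rfl; intro c _
    have hset : (fun ω => (X ω, (Y ω, Z ω))) ⁻¹' {(a, (b, c))}
        = X ⁻¹' {a} ∩ Y ⁻¹' {b} ∩ Z ⁻¹' {c} := by
      ext ω
      simp only [Set.mem_preimage, Set.mem_singleton_iff, Prod.ext_iff, Set.mem_inter_iff]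
      tauto
    rw [hset]
  have e2 : entH μ (fun ω => (Y ω, Z ω)) = ∑ b, ∑ c, negMulLog (∑ a, q a b c) := by
    rw [entH_pair_expand]
    apply Finset.sum_congr rfl; intro b _
    apply Finset.sum_congr rfl; intro c _
    congr 1
    rw [fiber_split hX ((hY b).inter (hZ c))]
    apply Finset.sum_congr rfl; intro a _
    have hset : X ⁻¹' {a} ∩ (Y ⁻¹' {b} ∩ Z ⁻¹' {c}) = X ⁻¹' {a} ∩ Y ⁻¹' {b} ∩ Z ⁻¹' {c} := by
      rw [Set.inter_assoc]
    rw [hset]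
  have e3 : entH μ (fun ω => (X ω, Z ω)) = ∑ a, ∑ c, negMulLog (∑ b, q a b c) := by
    rw [entH_pair_expand]
    apply Finset.sum_congr rfl; intro a _
    apply Finset.sum_congr rfl; intro c _
    congr 1
    rw [fiber_split hY ((hX a).inter (hZ c))]
    apply Finset.sum_congr rfl; intro b _
    have hset : Y ⁻¹' {b} ∩ (X ⁻¹' {a} ∩ Z ⁻¹' {c}) = X ⁻¹' {a} ∩ Y ⁻¹' {b} ∩ Z ⁻¹' {c} := by
      ext ω
      simp only [Set.mem_inter_iff, Set.mem_preimage, Set.mem_singleton_iff]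
      tauto
    rw [hset]
  have e4 : entH μ Z = ∑ c, negMulLog (∑ a, ∑ b, q a b c) := by
    unfold entH
    apply Finset.sum_congr rfl; intro c _
    congr 1
    rw [fiber_split hX (hZ c)]
    apply Finset.sum_congr rfl; intro a _
    rw [fiber_split hY ((hX a).inter (hZ c))]
    apply Finset.sum_congr rfl; intro b _
    have hset : Y ⁻¹' {b} ∩ (X ⁻¹' {a} ∩ Z ⁻¹' {c}) = X ⁻¹' {a} ∩ Y ⁻¹' {b} ∩ Z ⁻¹' {c} := by
      ext ω
      simp only [Set.mem_inter_iff, Set.mem_preimage, Set.mem_singleton_iff]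
      tauto
    rw [hset]
  have hsum : ∑ a, ∑ b, ∑ c, q a b c = 1 := by
    rw [swap3']
    have : ∀ c, ∑ a, ∑ b, q a b c = (μ (Z ⁻¹' {c})).toReal := by
      intro c
      rw [fiber_split hX (hZ c)]
      apply Finset.sum_congr rfl; intro a _
      rw [fiber_split hY ((hX a).inter (hZ c))]
      apply Finset.sum_congr rfl; intro b _
      have hset : Y ⁻¹' {b} ∩ (X ⁻¹' {a} ∩ Z ⁻¹' {c}) = X ⁻¹' {a} ∩ Y ⁻¹' {b} ∩ Z ⁻¹' {c} := by
        ext ω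
        simp only [Set.mem_inter_iff, Set.mem_preimage, Set.mem_singleton_iff]
        tauto
      rw [hset]
    rw [Finset.sum_congr rfl (fun c _ => this c)]
    exact sum_fiber hZ
  have := submod_arith q hq hsum
  unfold condEntH
  rw [e1, e2, e3, e4]
  linarith

/-- Conditioning on a function of the conditioner can only increase cond. entropy. -/
lemma condEntH_comp_cond_le [IsProbabilityMeasure μ] {X : Ω → A} {W : Ω → B}
    (hX : FiberMeas X) (hW : FiberMeas W) (f : B → C) :
    condEntH μ X W ≤ condEntH μ X (fun ω => f (W ω)) := by
  have hcop : Cop W (fun ω => (W ω, f (W ω))) :=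
    ⟨⟨fun w => (w, f w), fun ω => rfl⟩, ⟨Prod.fst, fun ω => rfl⟩⟩
  have h1 : condEntH μ X W = condEntH μ X (fun ω => (W ω, f (W ω))) :=
    condEntH_congr (Cop.refl X) hcop
  rw [h1]
  exact condEntH_pair_cond_le hX hW (hW.comp f)

/-- Entropy of a pair of independent random variables. -/
lemma entH_pair_indep [IsProbabilityMeasure μ]
    [MeasurableSpace A] [MeasurableSingletonClass A]
    [MeasurableSpace B] [MeasurableSingletonClass B]
    {X : Ω → A} {Y : Ω → B} (hX : Measurable X) (hY : Measurable Y)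
    (h : IndepFun X Y μ) :
    entH μ (fun ω => (X ω, Y ω)) = entH μ X + entH μ Y := by
  rw [entH_pair_expand]
  have hprod : ∀ a b, (μ (X ⁻¹' {a} ∩ Y ⁻¹' {b})).toReal
      = (μ (X ⁻¹' {a})).toReal * (μ (Y ⁻¹' {b})).toReal := by
    intro a b
    rw [h.measure_inter_preimage_eq_mul _ _ (measurableSet_singleton a)
      (measurableSet_singleton b), ENNReal.toReal_mul]
  calc ∑ a, ∑ b, negMulLog ((μ (X ⁻¹' {a} ∩ Y ⁻¹' {b})).toReal)
      = ∑ a, ∑ b, ((μ (Y ⁻¹' {b})).toReal * negMulLog ((μ (X ⁻¹' {a})).toReal)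
          + (μ (X ⁻¹' {a})).toReal * negMulLog ((μ (Y ⁻¹' {b})).toReal)) := by
        apply Finset.sum_congr rfl; intro a _
        apply Finset.sum_congr rfl; intro b _
        rw [hprod a b, negMulLog_mul]
    _ = entH μ X + entH μ Y := by
        have hstep : ∀ a, ∑ b, ((μ (Y ⁻¹' {b})).toReal * negMulLog ((μ (X ⁻¹' {a})).toReal)
            + (μ (X ⁻¹' {a})).toReal * negMulLog ((μ (Y ⁻¹' {b})).toReal))
            = negMulLog ((μ (X ⁻¹' {a})).toReal)
              + (μ (X ⁻¹' {a})).toReal * entH μ Y := by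
          intro a
          rw [Finset.sum_add_distrib, ← Finset.sum_mul, ← Finset.mul_sum,
            sum_fiber (FiberMeas.of_meas hY), one_mul]
          rfl
        rw [Finset.sum_congr rfl (fun a _ => hstep a), Finset.sum_add_distrib,
          ← Finset.sum_mul, sum_fiber (FiberMeas.of_meas hX), one_mul]
        rfl

end Tools4

section Tools5

set_option linter.unusedSectionVars false
set_option maxHeartbeats 1000000

variable {Ω : Type*} [MeasurableSpace Ω] {μ : Measure Ω}
variable {A B C D E : Type*} [Fintype A] [Fintype B] [Fintype C] [Fintype D] [Fintype E]

open Real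

lemma cop_assoc (X : Ω → A) (Y : Ω → B) (Z : Ω → C) :
    Cop (fun ω => ((X ω, Y ω), Z ω)) (fun ω => (X ω, (Y ω, Z ω))) :=
  ⟨⟨fun p => (p.1.1, (p.1.2, p.2)), fun _ => rfl⟩,
   ⟨fun p => ((p.1, p.2.1), p.2.2), fun _ => rfl⟩⟩

lemma cop_swap (X : Ω → A) (Y : Ω → B) :
    Cop (fun ω => (X ω, Y ω)) (fun ω => (Y ω, X ω)) :=
  ⟨⟨fun p => (p.2, p.1), fun _ => rfl⟩, ⟨fun p => (p.2, p.1), fun _ => rfl⟩⟩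

/-- Chain rule. -/
lemma condEntH_chain (X : Ω → A) (Y : Ω → B) (Z : Ω → C) :
    condEntH μ (fun ω => (X ω, Y ω)) Z
      = condEntH μ X (fun ω => (Y ω, Z ω)) + condEntH μ Y Z := by
  unfold condEntH
  have h : entH μ (fun ω => ((X ω, Y ω), Z ω)) = entH μ (fun ω => (X ω, (Y ω, Z ω))) :=
    entH_congr (cop_assoc X Y Z)
  rw [h]
  ring

lemma entH_subsingleton [IsProbabilityMeasure μ] [Subsingleton A] [Nonempty A] (c : Ω → A) :
    entH μ c = 0 := by
  have : Unique A := uniqueOfSubsingleton (Classical.arbitrary A)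
  unfold entH
  rw [Finset.univ_unique, Finset.sum_singleton]
  have : c ⁻¹' {default} = Set.univ := by
    ext ω; simp [Subsingleton.elim (c ω) default]
  rw [this]
  simp [Real.negMulLog]

lemma cop_pair_unit [Subsingleton B] [Nonempty B] (X : Ω → A) (c : Ω → B) :
    Cop (fun ω => (X ω, c ω)) X :=
  ⟨⟨Prod.fst, fun _ => rfl⟩,
   ⟨fun a => (a, Classical.arbitrary B),
    fun ω => by simp [Prod.ext_iff]; exact Subsingleton.elim _ _⟩⟩

/-- Conditioning on a trivial variable gives plain entropy. -/
lemma condEntH_unit [IsProbabilityMeasure μ] [Subsingleton B] [Nonempty B]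
    (X : Ω → A) (c : Ω → B) : condEntH μ X c = entH μ X := by
  unfold condEntH
  rw [entH_congr (cop_pair_unit X c), entH_subsingleton c, sub_zero]

/-- A trivial variable has zero conditional entropy. -/
lemma condEntH_unit_left [IsProbabilityMeasure μ] [Subsingleton A] [Nonempty A]
    (c : Ω → A) (Z : Ω → B) : condEntH μ c Z = 0 := by
  unfold condEntH
  have : Cop (fun ω => (c ω, Z ω)) Z :=
    ⟨⟨Prod.snd, fun _ => rfl⟩,
     ⟨fun z => (Classical.arbitrary A, z),
      fun ω => by simp [Prod.ext_iff]; exact Subsingleton.elim _ _⟩⟩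
  rw [entH_congr this]
  ring

lemma Det.pair_right {W : Ω → A} {W' : Ω → B} (h : Det W W') (Z : Ω → C) :
    Det (fun ω => (W ω, Z ω)) (fun ω => (W' ω, Z ω)) := by
  obtain ⟨f, hf⟩ := h
  exact ⟨fun p => (f p.1, p.2), fun ω => by simp [hf ω]⟩

/-- Coarsening the conditioner increases conditional entropy. -/
lemma condEntH_det_le [IsProbabilityMeasure μ] {X : Ω → A} {W : Ω → B} {W' : Ω → C}
    (hX : FiberMeas X) (hW : FiberMeas W) (h : Det W W') :
    condEntH μ X W ≤ condEntH μ X W' := by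
  obtain ⟨f, hf⟩ := h
  have : W' = fun ω => f (W ω) := funext hf
  rw [this]
  exact condEntH_comp_cond_le hX hW f

end Tools5

section Tools6

set_option linter.unusedSectionVars false
set_option maxHeartbeats 1000000

variable {Ω : Type*} [MeasurableSpace Ω] {μ : Measure Ω}
variable {ι : Type*} [DecidableEq ι] {V : ι → Type*} [∀ i, Fintype (V i)]

lemma joint_det_subset (X : ∀ i, Ω → V i) {U W : Finset ι} (h : U ⊆ W) :
    Det (jointOn X W) (jointOn X U) :=
  ⟨fun g i => g ⟨i.1, h i.2⟩, fun _ => rfl⟩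

lemma cop_joint_insert (X : ∀ i, Ω → V i) (m : ι) (U : Finset ι) :
    Cop (jointOn X (insert m U)) (fun ω => (X m ω, jointOn X U ω)) := by
  constructor
  · exact ⟨fun g => (g ⟨m, Finset.mem_insert_self m U⟩,
      fun i => g ⟨i.1, Finset.mem_insert_of_mem i.2⟩), fun _ => rfl⟩
  · refine ⟨fun p i => if h : (i : ι) = m then cast (by rw [h]) p.1
      else p.2 ⟨i.1, Finset.mem_of_mem_insert_of_ne i.2 h⟩, ?_⟩
    intro ω
    funext i
    by_cases h : (i : ι) = m
    · simp only [dif_pos h]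
      have key : ∀ (j : ι) (hj : j = m), X j ω = cast (show V m = V j by rw [hj]) (X m ω) := by
        intro j hj; subst hj; simp
      exact key i.1 h
    · simp only [dif_neg h]
      rfl

lemma cop_joint_singleton (X : ∀ i, Ω → V i) (m : ι) :
    Cop (jointOn X ({m} : Finset ι)) (X m) := by
  constructor
  · exact ⟨fun g => g ⟨m, Finset.mem_singleton_self m⟩, fun _ => rfl⟩
  · refine ⟨fun v i => cast (show V m = V i.1 by rw [Finset.mem_singleton.mp i.2]) v, ?_⟩
    intro ω
    funext i
    have key : ∀ (j : ι) (hj : j = m), X j ω = cast (show V m = V j by rw [hj]) (X m ω) := by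
      intro j hj; subst hj; simp
    exact key i.1 (Finset.mem_singleton.mp i.2)

end Tools6

section Tools7

set_option linter.unusedSectionVars false
set_option maxHeartbeats 1000000

open Real

variable {Ω : Type*} [MeasurableSpace Ω] {μ : Measure Ω} [IsProbabilityMeasure μ]
variable {L : ℕ} {V : Fin L → Type*} [∀ i, Fintype (V i)] [∀ i, MeasurableSpace (V i)]
  [∀ i, MeasurableSingletonClass (V i)]
variable {K : Type*} [Fintype K]

instance piEmptySubsingleton {ι : Type*} {W : ι → Type*} :
    Subsingleton ((i : (∅ : Finset ι)) → W i) :=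
  ⟨fun f g => funext fun i => absurd i.2 (Finset.notMem_empty _)⟩

instance piEmptyNonempty {ι : Type*} {W : ι → Type*} :
    Nonempty ((i : (∅ : Finset ι)) → W i) :=
  ⟨fun i => absurd i.2 (Finset.notMem_empty _)⟩

/-- The index `⟨l + β⟩`. -/
def nxt {L : ℕ} (l : Fin L) (β : ℕ) : Fin L := ⟨((l : ℕ) + β) % L, Nat.mod_lt _ l.pos⟩

lemma win_zero (l : Fin L) : win L l 0 = ∅ := by simp [win]

lemma win_succ (l : Fin L) (β : ℕ) : win L l (β + 1) = insert (nxt l β) (win L l β) := by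
  rw [win, Finset.range_add_one, Finset.image_insert]
  rfl

lemma mod_succ_lemma {L a b : ℕ} : (a % L + b) % L = (a + b) % L := Nat.mod_add_mod a L b

lemma nxt_shift (l : Fin L) (β : ℕ) : nxt l (β + 1) = nxt (nxt l 1) β := by
  apply Fin.ext
  show ((l : ℕ) + (β + 1)) % L = (((l : ℕ) + 1) % L + β) % L
  rw [mod_succ_lemma]
  congr 1
  omega

lemma win_shift_subset (l : Fin L) (β : ℕ) : win L (nxt l 1) β ⊆ win L l (β + 1) := by
  intro x hx
  rw [win, Finset.mem_image] at hx ⊢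
  obtain ⟨k, hk, rfl⟩ := hx
  refine ⟨k + 1, ?_, ?_⟩
  · rw [Finset.mem_range] at hk ⊢; omega
  · apply Fin.ext
    show ((l : ℕ) + (k + 1)) % L = (((l : ℕ) + 1) % L + k) % L
    rw [mod_succ_lemma]
    congr 1
    omega

lemma fm_joint {X : ∀ i, Ω → V i} (hX : ∀ i, Measurable (X i)) (U : Finset (Fin L)) :
    FiberMeas (jointOn X U) :=
  FiberMeas.of_meas (measurable_pi_lambda _ (fun i => hX i))

lemma nxt_bijective (hL : 1 ≤ L) : Function.Bijective (fun l : Fin L => nxt l 1) := by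
  rw [Fintype.bijective_iff_injective_and_card]
  refine ⟨?_, rfl⟩
  intro a b h
  have h' : ((a : ℕ) + 1) % L = ((b : ℕ) + 1) % L := congrArg Fin.val h
  have key : ∀ n : ℕ, n < L → (n + 1) % L = if n + 1 = L then 0 else n + 1 := by
    intro n hn
    split
    · next heq => rw [heq, Nat.mod_self]
    · next hne => exact Nat.mod_eq_of_lt (by omega)
  rw [key _ a.isLt, key _ b.isLt] at h'
  apply Fin.ext
  have ha := a.isLt
  have hb := b.isLt
  by_cases h1 : (a : ℕ) + 1 = L <;> by_cases h2 : (b : ℕ) + 1 = L <;>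
    simp [h1, h2] at h' <;> omega

/-- The sliding-window Han-type inequality (conditional on a fixed `Z`). -/
lemma han_step (X : ∀ i, Ω → V i) (hX : ∀ i, Measurable (X i)) (Z : Ω → K)
    (hZ : FiberMeas Z) (α : ℕ) :
    ((α : ℝ) + 1) * ∑ l : Fin L, condEntH μ (jointOn X (win L l (α + 2))) Z
      ≤ ((α : ℝ) + 2) * ∑ l : Fin L, condEntH μ (jointOn X (win L l (α + 1))) Z := by
  classical
  rcases Nat.eq_zero_or_pos L with hL0 | hLpos
  · subst hL0
    simp
  have hL : 1 ≤ L := hLpos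
  set D : ℕ → ℝ := fun γ => ∑ l : Fin L,
    condEntH μ (X (nxt l γ)) (fun ω => (jointOn X (win L l γ) ω, Z ω)) with hD
  have hchain : ∀ β : ℕ, ∑ l : Fin L, condEntH μ (jointOn X (win L l (β + 1))) Z
      = (∑ l : Fin L, condEntH μ (jointOn X (win L l β)) Z) + D β := by
    intro β
    rw [hD, ← Finset.sum_add_distrib]
    apply Finset.sum_congr rfl
    intro l _
    rw [win_succ l β]
    have h1 : condEntH μ (jointOn X (insert (nxt l β) (win L l β))) Z
        = condEntH μ (fun ω => (X (nxt l β) ω, jointOn X (win L l β) ω)) Z :=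
      condEntH_congr (cop_joint_insert X (nxt l β) (win L l β)) (Cop.refl Z)
    rw [h1, condEntH_chain]
    ring
  have hzero : ∑ l : Fin L, condEntH μ (jointOn X (win L l 0)) Z = 0 := by
    apply Finset.sum_eq_zero
    intro l _
    rw [win_zero l]
    exact condEntH_unit_left _ _
  have hsumD : ∀ β : ℕ, ∑ l : Fin L, condEntH μ (jointOn X (win L l β)) Z
      = ∑ γ ∈ Finset.range β, D γ := by
    intro β
    induction β with
    | zero => simpa using hzero
    | succ n ih => rw [hchain n, ih, Finset.sum_range_succ]
  have hmono : ∀ γ : ℕ, D (γ + 1) ≤ D γ := by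
    intro γ
    have step : ∀ l : Fin L,
        condEntH μ (X (nxt l (γ + 1))) (fun ω => (jointOn X (win L l (γ + 1)) ω, Z ω))
          ≤ condEntH μ (X (nxt (nxt l 1) γ))
              (fun ω => (jointOn X (win L (nxt l 1) γ) ω, Z ω)) := by
      intro l
      rw [nxt_shift l γ]
      apply condEntH_det_le (FiberMeas.of_meas (hX _))
        ((fm_joint hX _).pair hZ)
      exact Det.pair_right (joint_det_subset X (win_shift_subset l γ)) Z
    calc D (γ + 1) ≤ ∑ l : Fin L, condEntH μ (X (nxt (nxt l 1) γ))
          (fun ω => (jointOn X (win L (nxt l 1) γ) ω, Z ω)) :=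
            Finset.sum_le_sum (fun l _ => step l)
      _ = D γ := by
          rw [hD]
          exact Function.Bijective.sum_comp (nxt_bijective hL)
            (fun l => condEntH μ (X (nxt l γ)) (fun ω => (jointOn X (win L l γ) ω, Z ω)))
  have hanti : ∀ γ δ : ℕ, γ ≤ δ → D δ ≤ D γ := by
    intro γ δ h
    induction δ, h using Nat.le_induction with
    | base => exact le_refl _
    | succ n hn ih => exact le_trans (hmono n) ih
  have hcard : ((α : ℝ) + 1) * D (α + 1) ≤ ∑ γ ∈ Finset.range (α + 1), D γ := by
    have h1 : ∀ γ ∈ Finset.range (α + 1), D (α + 1) ≤ D γ := by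
      intro γ hγ
      exact hanti γ (α + 1) (by simp at hγ; omega)
    have := Finset.card_nsmul_le_sum (Finset.range (α + 1)) D (D (α + 1)) h1
    rw [Finset.card_range, nsmul_eq_mul] at this
    push_cast at this ⊢
    linarith
  rw [hsumD (α + 2), hsumD (α + 1), Finset.sum_range_succ (n := α + 1)]
  set G := ∑ γ ∈ Finset.range (α + 1), D γ
  nlinarith [hcard]

end Tools7

section Tools8

set_option linter.unusedSectionVars false
set_option maxHeartbeats 1000000

open Real

variable {Ω : Type*} [MeasurableSpace Ω] {μ : Measure Ω} [IsProbabilityMeasure μ]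
variable {L : ℕ} {T : Fin L → Type*} [∀ i, Fintype (T i)] [∀ i, MeasurableSpace (T i)]
  [∀ i, MeasurableSingletonClass (T i)]
variable {K : Type*} [Fintype K]

lemma pre_zero : pre L 0 = ∅ := by
  ext i; simp [pre]

lemma pre_succ {α : ℕ} (hα : α < L) : pre L (α + 1) = insert ⟨α, hα⟩ (pre L α) := by
  ext i
  simp only [pre, Finset.mem_filter, Finset.mem_univ, true_and, Finset.mem_insert, Fin.ext_iff]
  omega

/-- Source extraction step. -/
lemma source_extract (S : ∀ i, Ω → T i) (hS : ∀ i, Measurable (S i))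
    (hindep : iIndepFun S μ)
    {α : ℕ} (hα : α < L) (W : Ω → K) (hW : FiberMeas W) {δ : ℝ}
    (hrecl : condEntH μ (jointOn S (pre L (α + 1))) W ≤ δ) :
    entH μ (S ⟨α, hα⟩) - δ + condEntH μ W (jointOn S (pre L (α + 1)))
      ≤ condEntH μ W (jointOn S (pre L α)) := by
  classical
  set i : Fin L := ⟨α, hα⟩ with hi
  set P := jointOn S (pre L α) with hP
  set Q := jointOn S (pre L (α + 1)) with hQ
  set s := S i with hs
  have hPfm : FiberMeas P := fm_joint hS _
  have hQfm : FiberMeas Q := fm_joint hS _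
  have hsfm : FiberMeas s := FiberMeas.of_meas (hS i)
  have cpQ : Cop Q (fun ω => (s ω, P ω)) := by
    rw [hQ, pre_succ hα]
    exact cop_joint_insert S i (pre L α)
  -- independence
  have hdisj : Disjoint ({i} : Finset (Fin L)) (pre L α) := by
    simp only [Finset.disjoint_singleton_left, pre, Finset.mem_filter, Finset.mem_univ, true_and]
    simp [hi]
  have hindep2 : IndepFun (jointOn S ({i} : Finset (Fin L))) P μ :=
    hindep.indepFun_finset {i} (pre L α) hdisj hS
  have hQ_ent : entH μ Q = entH μ s + entH μ P := by
    rw [entH_congr cpQ]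
    have c1 : Cop (fun ω => (s ω, P ω))
        (fun ω => (jointOn S ({i} : Finset (Fin L)) ω, P ω)) :=
      Cop.pair (cop_joint_singleton S i).symm (Cop.refl P)
    have hm1 : Measurable (jointOn S ({i} : Finset (Fin L))) :=
      measurable_pi_lambda _ (fun j => hS j)
    have hm2 : Measurable P := measurable_pi_lambda _ (fun j => hS j)
    have hadd := entH_pair_indep (μ := μ) hm1 hm2 hindep2
    rw [entH_congr c1, hadd, entH_congr (cop_joint_singleton S i)]
  have heq1 : entH μ (fun ω => (s ω, (W ω, P ω))) = entH μ (fun ω => (W ω, Q ω)) := by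
    have c2 : Cop (fun ω => (s ω, (W ω, P ω))) (fun ω => (W ω, (s ω, P ω))) :=
      ⟨⟨fun p => (p.2.1, (p.1, p.2.2)), fun _ => rfl⟩,
       ⟨fun p => (p.2.1, (p.1, p.2.2)), fun _ => rfl⟩⟩
    have c3 : Cop (fun ω => (W ω, (s ω, P ω))) (fun ω => (W ω, Q ω)) :=
      Cop.pair (Cop.refl W) cpQ.symm
    rw [entH_congr (c2.trans c3)]
  have hu_le : condEntH μ s (fun ω => (W ω, P ω)) ≤ δ := by
    have e1 : condEntH μ Q W = condEntH μ (fun ω => (s ω, P ω)) W :=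
      condEntH_congr cpQ (Cop.refl W)
    have e2 : condEntH μ (fun ω => (s ω, P ω)) W
        = condEntH μ s (fun ω => (P ω, W ω)) + condEntH μ P W := condEntH_chain s P W
    have e3 : condEntH μ s (fun ω => (P ω, W ω)) = condEntH μ s (fun ω => (W ω, P ω)) :=
      condEntH_congr (Cop.refl s) (cop_swap P W)
    have e4 : 0 ≤ condEntH μ P W := condEntH_nonneg hPfm hW
    linarith [hrecl, e1, e2, e3, e4]
  have d1 : condEntH μ W P = entH μ (fun ω => (W ω, P ω)) - entH μ P := rfl
  have d2 : condEntH μ s (fun ω => (W ω, P ω))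
      = entH μ (fun ω => (s ω, (W ω, P ω))) - entH μ (fun ω => (W ω, P ω)) := rfl
  have d3 : condEntH μ W Q = entH μ (fun ω => (W ω, Q ω)) - entH μ Q := rfl
  linarith [hu_le, d1, d2, d3, heq1, hQ_ent]

end Tools8


set_option maxHeartbeats 1600000 in
/-- **Sum-rate converse for SMDC under the weakened sliding-window reconstruction
requirement**: if `H(S_1,…,S_α | X_{W_l^{(α)}}) ≤ δ_α` for every `α` and every sliding window,
then `(1/L) ∑_l H(X_l) ≥ ∑_α H(S_α)/α − ∑_α δ_α/α`.  Here the source/rate index `i : Fin L`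
corresponds to the paper's index `α = i + 1`. -/
theorem smdc_sum_rate_converse_sliding_window
    {Ω : Type*} [MeasurableSpace Ω] (μ : Measure Ω) [IsProbabilityMeasure μ]
    {L : ℕ} (hL : 1 ≤ L)
    {T : Fin L → Type*} [∀ i, Fintype (T i)] [∀ i, MeasurableSpace (T i)]
    [∀ i, MeasurableSingletonClass (T i)]
    {V : Fin L → Type*} [∀ i, Fintype (V i)] [∀ i, MeasurableSpace (V i)]
    [∀ i, MeasurableSingletonClass (V i)]
    (S : ∀ i, Ω → T i) (hS : ∀ i, Measurable (S i))
    (hindep : iIndepFun S μ)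
    (X : ∀ i, Ω → V i) (hX : ∀ i, Measurable (X i))
    (δ : Fin L → ℝ) (hδ : ∀ i, 0 ≤ δ i)
    (hrec : ∀ i : Fin L, ∀ l : Fin L,
      condEntH μ (jointOn S (pre L ((i : ℕ) + 1))) (jointOn X (win L l ((i : ℕ) + 1))) ≤ δ i) :
    (1 / (L : ℝ)) * ∑ l : Fin L, entH μ (X l) ≥
      ∑ i : Fin L, entH μ (S i) / ((i : ℕ) + 1 : ℝ) -
        ∑ i : Fin L, δ i / ((i : ℕ) + 1 : ℝ) := by
  classical
  have hL0 : (0:ℝ) < L := by exact_mod_cast hL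
  set Fb : ℕ → ℝ := fun α => ∑ l : Fin L,
    condEntH μ (jointOn X (win L l (α+1))) (jointOn S (pre L α)) with hFb
  set Gb : ℕ → ℝ := fun α => ∑ l : Fin L,
    condEntH μ (jointOn X (win L l (α+1))) (jointOn S (pre L (α+1))) with hGb
  set R : ℕ → ℝ := fun α => ∑ i ∈ Finset.univ.filter (fun i : Fin L => α ≤ (i:ℕ)),
    (L:ℝ)/((i:ℕ)+1) * (entH μ (S i) - δ i) with hR
  have hGb_nonneg : ∀ α, 0 ≤ Gb α := fun α => Finset.sum_nonneg
    (fun l _ => condEntH_nonneg (fm_joint hX _) (fm_joint hS _))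
  have hextract : ∀ (α : ℕ) (hα : α < L),
      (L:ℝ) * (entH μ (S ⟨α,hα⟩) - δ ⟨α,hα⟩) + Gb α ≤ Fb α := by
    intro α hα
    have hl : ∀ l : Fin L,
        entH μ (S ⟨α,hα⟩) - δ ⟨α,hα⟩
          + condEntH μ (jointOn X (win L l (α+1))) (jointOn S (pre L (α+1)))
          ≤ condEntH μ (jointOn X (win L l (α+1))) (jointOn S (pre L α)) := by
      intro l
      exact source_extract S hS hindep hα _ (fm_joint hX _) (hrec ⟨α,hα⟩ l)
    have hsum := Finset.sum_le_sum (fun l (_ : l ∈ Finset.univ) => hl l)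
    rw [Finset.sum_add_distrib, Finset.sum_const, Finset.card_univ, Fintype.card_fin,
      nsmul_eq_mul] at hsum
    simp only [hFb, hGb]
    exact hsum
  have hhan : ∀ α : ℕ, ((α:ℝ)+1) * Fb (α+1) ≤ ((α:ℝ)+2) * Gb α := by
    intro α
    have h := han_step (μ := μ) X hX (jointOn S (pre L (α+1))) (fm_joint hS _) α
    simp only [hFb, hGb]
    exact h
  have claim : ∀ m : ℕ, ∀ α : ℕ, α + m + 1 = L → ((α:ℝ)+1) * R α ≤ Fb α := by
    intro m
    induction m with
    | zero =>
      intro α hαL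
      have hα : α < L := by omega
      have hfilter : Finset.univ.filter (fun i : Fin L => α ≤ (i:ℕ)) = {(⟨α,hα⟩ : Fin L)} := by
        ext i
        simp only [Finset.mem_filter, Finset.mem_univ, true_and, Finset.mem_singleton,
          Fin.ext_iff]
        have := i.isLt
        omega
      have hcoe : (((⟨α,hα⟩ : Fin L) : ℕ) : ℝ) = (α : ℝ) := rfl
      have hRα : R α = (L:ℝ)/((α:ℝ)+1) * (entH μ (S ⟨α,hα⟩) - δ ⟨α,hα⟩) := by
        simp only [hR, hfilter, Finset.sum_singleton, hcoe]
      have h1 := hextract α hα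
      have h2 := hGb_nonneg α
      have hne : ((α:ℝ)+1) ≠ 0 := by positivity
      have hmulid : ((α:ℝ)+1) * ((L:ℝ)/((α:ℝ)+1) * (entH μ (S ⟨α,hα⟩) - δ ⟨α,hα⟩))
          = (L:ℝ) * (entH μ (S ⟨α,hα⟩) - δ ⟨α,hα⟩) := by
        field_simp
      rw [hRα, hmulid]
      linarith
    | succ n ih =>
      intro α hαL
      have hα : α < L := by omega
      have hnext := ih (α+1) (by omega)
      have hcast : (((α+1 : ℕ)) : ℝ) + 1 = (α : ℝ) + 2 := by push_cast; ring
      rw [hcast] at hnext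
      have hhanα := hhan α
      have hp1 : (0:ℝ) ≤ (α:ℝ)+1 := by positivity
      have hp2 : (0:ℝ) < (α:ℝ)+2 := by positivity
      have hGlow : ((α:ℝ)+1) * R (α+1) ≤ Gb α := by
        have h3 : ((α:ℝ)+1) * (((α:ℝ)+2) * R (α+1)) ≤ ((α:ℝ)+1) * Fb (α+1) :=
          mul_le_mul_of_nonneg_left hnext hp1
        nlinarith [h3, hhanα, hp2]
      have hins : Finset.univ.filter (fun i : Fin L => α ≤ (i:ℕ))
          = insert (⟨α,hα⟩ : Fin L) (Finset.univ.filter (fun i : Fin L => α+1 ≤ (i:ℕ))) := by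
        ext i
        simp only [Finset.mem_filter, Finset.mem_univ, true_and, Finset.mem_insert, Fin.ext_iff]
        omega
      have hnotmem : (⟨α,hα⟩ : Fin L) ∉ Finset.univ.filter (fun i : Fin L => α+1 ≤ (i:ℕ)) := by
        simp
      have hcoe : (((⟨α,hα⟩ : Fin L) : ℕ) : ℝ) = (α : ℝ) := rfl
      have hsplit : R α = (L:ℝ)/((α:ℝ)+1) * (entH μ (S ⟨α,hα⟩) - δ ⟨α,hα⟩) + R (α+1) := by
        simp only [hR]
        rw [hins, Finset.sum_insert hnotmem, hcoe]
      have h1 := hextract α hα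
      have hne : ((α:ℝ)+1) ≠ 0 := by positivity
      have hmulid : ((α:ℝ)+1) * ((L:ℝ)/((α:ℝ)+1) * (entH μ (S ⟨α,hα⟩) - δ ⟨α,hα⟩))
          = (L:ℝ) * (entH μ (S ⟨α,hα⟩) - δ ⟨α,hα⟩) := by
        field_simp
      rw [hsplit, mul_add, hmulid]
      linarith
  have hFb0 : Fb 0 = ∑ l : Fin L, entH μ (X l) := by
    simp only [hFb]
    apply Finset.sum_congr rfl
    intro l _
    have hnxt : nxt l 0 = l := Fin.ext (by simp [nxt, Nat.mod_eq_of_lt l.isLt])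
    have hw1 : win L l 1 = {l} := by
      rw [win_succ, win_zero, hnxt]
      rfl
    rw [pre_zero, hw1, condEntH_unit]
    exact entH_congr (cop_joint_singleton X l)
  have hclaim0 := claim (L-1) 0 (by omega)
  have hR0 : R 0 = ∑ i : Fin L, (L:ℝ)/((i:ℕ)+1) * (entH μ (S i) - δ i) := by
    simp only [hR]
    rw [Finset.filter_true_of_mem (fun i _ => Nat.zero_le _)]
  have key : ∑ i : Fin L, (L:ℝ)/((i:ℕ)+1) * (entH μ (S i) - δ i)
      ≤ ∑ l : Fin L, entH μ (X l) := by
    rw [← hR0, ← hFb0]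
    have : ((0:ℕ):ℝ) + 1 = 1 := by norm_num
    rw [this, one_mul] at hclaim0
    exact hclaim0
  have expand : (1/(L:ℝ)) * ∑ i : Fin L, (L:ℝ)/((i:ℕ)+1) * (entH μ (S i) - δ i)
      = ∑ i : Fin L, entH μ (S i)/((i:ℕ)+1 : ℝ) - ∑ i : Fin L, δ i/((i:ℕ)+1 : ℝ) := by
    rw [Finset.mul_sum, ← Finset.sum_sub_distrib]
    apply Finset.sum_congr rfl
    intro i _
    have h1 : ((i:ℕ):ℝ)+1 ≠ 0 := by positivity
    have h2 : (L:ℝ) ≠ 0 := ne_of_gt hL0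
    field_simp
  have hmul := mul_le_mul_of_nonneg_left key (le_of_lt (by positivity : (0:ℝ) < 1/(L:ℝ)))
  rw [expand] at hmul
  linarith [hmul]
end

section
/- Converse bound for classical SMDC along an arbitrary supporting hyperplane: Let L ≥ 1, let λ = (λ_1,…,λ_L) with all λ_l ≥ 0, let S_1,…,S_L be mutually independent random variables each taking values in a finite set, let X_1,…,X_L be random variables jointly distributed with them (each taking values in a finite set), and let δ_1,…,δ_L ≥ 0. Suppose that for every α ∈ {1,…,L} and every U ∈ Ω_L^{(α)}, H(S_1,…,S_α | X_U) ≤ δ_α. Then ∑_{l=1}^{L} λ_l H(X_l) ≥ ∑_{α=1}^{L} f_α(λ) H(S_α) − ∑_{α=1}^{L} f_α(λ) δ_α. -/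
open MeasureTheory ProbabilityTheory

/-- `Ω_L^{(α)}`: the collection of all `α`-element subsets of the index set. -/
def OmegaL (L α : ℕ) : Finset (Finset (Fin L)) :=
  Finset.powersetCard α (Finset.univ : Finset (Fin L))

/-- `f_α(λ)`: the optimal value of the covering linear program. -/
noncomputable def fLP (L : ℕ) (lam : Fin L → ℝ) (α : ℕ) : ℝ :=
  sSup { x : ℝ | ∃ c : Finset (Fin L) → ℝ,
    (∀ U ∈ OmegaL L α, 0 ≤ c U) ∧
    (∀ l : Fin L, ∑ U ∈ (OmegaL L α).filter (fun U => l ∈ U), c U ≤ lam l) ∧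
    x = ∑ U ∈ OmegaL L α, c U }

/-- `c` is an optimal solution of the linear program defining `f_α(λ)`. -/
def IsOptimal (L : ℕ) (lam : Fin L → ℝ) (α : ℕ) (c : Finset (Fin L) → ℝ) : Prop :=
  (∀ U ∈ OmegaL L α, 0 ≤ c U) ∧
  (∀ l : Fin L, ∑ U ∈ (OmegaL L α).filter (fun U => l ∈ U), c U ≤ lam l) ∧
  ∑ U ∈ OmegaL L α, c U = fLP L lam α

set_option linter.unusedSectionVars false
set_option linter.dupNamespace false
set_option maxHeartbeats 2000000
open scoped Classical
open Real

namespace SMDC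





variable {Ω : Type*} [MeasurableSpace Ω] (μ : Measure Ω)

noncomputable def pm {S : Type*} (Y : Ω → S) (s : S) : ℝ := (μ (Y ⁻¹' {s})).toReal

lemma pm_nonneg {S : Type*} (Y : Ω → S) (s : S) : 0 ≤ pm μ Y s := ENNReal.toReal_nonneg

variable [IsProbabilityMeasure μ]

lemma pm_le_one {S : Type*} (Y : Ω → S) (s : S) : pm μ Y s ≤ 1 := by
  have h := prob_le_one (μ := μ) (s := Y ⁻¹' {s})
  simpa [pm] using ENNReal.toReal_le_of_le_ofReal zero_le_one (by simpa using h)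

variable {S : Type*} [Fintype S] [MeasurableSpace S] [MeasurableSingletonClass S]

lemma measure_preimage_ne_top {Y : Ω → S} (s : S) : μ (Y ⁻¹' {s}) ≠ ⊤ :=
  (measure_lt_top μ _).ne

lemma sum_pm {Y : Ω → S} (hY : Measurable Y) : ∑ s : S, pm μ Y s = 1 := by
  classical
  have hdisj : (↑(Finset.univ : Finset S) : Set S).PairwiseDisjoint (fun s => Y ⁻¹' {s}) := by
    intro a _ b _ hab
    exact Set.disjoint_left.2 (by intro ω ha hb; exact hab (by simp at ha hb; rw [← ha, ← hb]))
  have hmeas : ∀ s ∈ (Finset.univ : Finset S), MeasurableSet (Y ⁻¹' {s}) :=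
    fun s _ => hY (measurableSet_singleton s)
  have h : μ (⋃ s ∈ (Finset.univ : Finset S), Y ⁻¹' {s}) = ∑ s : S, μ (Y ⁻¹' {s}) :=
    measure_biUnion_finset hdisj hmeas
  have hU : (⋃ s ∈ (Finset.univ : Finset S), Y ⁻¹' {s}) = Set.univ := by
    ext ω; simp
  rw [hU, measure_univ] at h
  have := congrArg ENNReal.toReal h
  rw [ENNReal.toReal_sum (fun s _ => measure_preimage_ne_top μ s)] at this
  simpa [pm] using this.symm

lemma pm_comp {S' : Type*} [Fintype S'] {Y : Ω → S} (hY : Measurable Y) (g : S → S')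
    (t : S') :
    pm μ (fun ω => g (Y ω)) t = ∑ s ∈ Finset.univ.filter (fun s => g s = t), pm μ Y s := by
  classical
  have hpre : (fun ω => g (Y ω)) ⁻¹' {t} =
      ⋃ s ∈ Finset.univ.filter (fun s => g s = t), Y ⁻¹' {s} := by
    ext ω; simp [Set.mem_preimage]
  have hdisj : (↑((Finset.univ.filter (fun s => g s = t)) : Finset S) : Set S).PairwiseDisjoint
      (fun s => Y ⁻¹' {s}) := by
    intro a _ b _ hab
    exact Set.disjoint_left.2 (by intro ω ha hb; exact hab (by simp at ha hb; rw [← ha, ← hb]))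
  have h := measure_biUnion_finset (μ := μ) hdisj
    (fun s _ => hY (measurableSet_singleton s))
  rw [← hpre] at h
  have := congrArg ENNReal.toReal h
  rw [ENNReal.toReal_sum (fun s _ => measure_preimage_ne_top μ s)] at this
  simpa [pm] using this




/-- pure: negMulLog is superadditive -/
lemma negMulLog_sum_le {ι : Type*} (t : Finset ι) (a : ι → ℝ) (ha : ∀ i ∈ t, 0 ≤ a i) :
    negMulLog (∑ i ∈ t, a i) ≤ ∑ i ∈ t, negMulLog (a i) := by
  have hA : ∀ i ∈ t, a i ≤ ∑ j ∈ t, a j := fun i hi =>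
    Finset.single_le_sum (fun j hj => ha j hj) hi
  have hrw : negMulLog (∑ i ∈ t, a i) = ∑ i ∈ t, -(a i * log (∑ j ∈ t, a j)) := by
    rw [negMulLog, neg_mul, Finset.sum_mul, ← Finset.sum_neg_distrib]
  rw [hrw]
  apply Finset.sum_le_sum
  intro i hi
  rcases eq_or_lt_of_le (ha i hi) with h0 | h0
  · simp [← h0, negMulLog]
  · rw [negMulLog, neg_mul]
    have hlog := Real.log_le_log h0 (hA i hi)
    nlinarith
/-- pure Gibbs inequality -/
lemma klsum {ι : Type*} [Fintype ι] (p q : ι → ℝ) (hp : ∀ i, 0 ≤ p i) (hq : ∀ i, 0 ≤ q i)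
    (hpq : ∀ i, p i ≠ 0 → q i ≠ 0) (hsum : ∑ i, q i ≤ ∑ i, p i) :
    ∑ i, p i * log (q i) ≤ ∑ i, p i * log (p i) := by
  have key : ∀ i, p i * log (q i) - p i * log (p i) ≤ q i - p i := by
    intro i
    rcases eq_or_lt_of_le (hp i) with h0 | h0
    · rw [← h0]; simpa using hq i
    · have hq0 : 0 < q i := lt_of_le_of_ne (hq i) (Ne.symm (hpq i (ne_of_gt h0)))
      have hld : log (q i / p i) ≤ q i / p i - 1 := Real.log_le_sub_one_of_pos (by positivity)
      rw [Real.log_div (ne_of_gt hq0) (ne_of_gt h0)] at hld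
      have hmul := mul_le_mul_of_nonneg_left hld (le_of_lt h0)
      have heq : p i * (q i / p i - 1) = q i - p i := by field_simp
      nlinarith
  have hs := Finset.sum_le_sum (fun i (_ : i ∈ Finset.univ) => key i)
  rw [Finset.sum_sub_distrib, Finset.sum_sub_distrib] at hs
  linarith

/-- pure submodularity at distribution level -/
lemma submod_pure {A B C : Type*} [Fintype A] [Fintype B] [Fintype C]
    (P : A → B → C → ℝ) (hP : ∀ a b c, 0 ≤ P a b c) :
    (∑ a, ∑ b, ∑ c, negMulLog (P a b c)) + ∑ c, negMulLog (∑ a, ∑ b, P a b c) ≤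
      (∑ a, ∑ c, negMulLog (∑ b, P a b c)) + ∑ b, ∑ c, negMulLog (∑ a, P a b c) := by
  set r : A → C → ℝ := fun a c => ∑ b, P a b c with hr
  set s : B → C → ℝ := fun b c => ∑ a, P a b c with hs
  set t : C → ℝ := fun c => ∑ a, ∑ b, P a b c with ht
  have hr0 : ∀ a c, 0 ≤ r a c := fun a c => Finset.sum_nonneg fun b _ => hP a b c
  have hs0 : ∀ b c, 0 ≤ s b c := fun b c => Finset.sum_nonneg fun a _ => hP a b c
  have ht0 : ∀ c, 0 ≤ t c := fun c => Finset.sum_nonneg fun a _ => Finset.sum_nonneg fun b _ => hP a b c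
  have hPr : ∀ a b c, P a b c ≤ r a c := fun a b c =>
    Finset.single_le_sum (fun b' (_ : b' ∈ Finset.univ) => hP a b' c) (Finset.mem_univ b)
  have hPs : ∀ a b c, P a b c ≤ s b c := fun a b c =>
    Finset.single_le_sum (fun a' (_ : a' ∈ Finset.univ) => hP a' b c) (Finset.mem_univ a)
  have hrt : ∀ a c, r a c ≤ t c := fun a c =>
    Finset.single_le_sum (fun a' (_ : a' ∈ Finset.univ) => hr0 a' c) (Finset.mem_univ a)
  have htr : ∀ c, ∑ a, r a c = t c := fun c => rfl
  have hts : ∀ c, ∑ b, s b c = t c := fun c => Finset.sum_comm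
  set q : A → B → C → ℝ := fun a b c => if t c = 0 then 0 else r a c * s b c / t c with hqdef
  have hq0 : ∀ a b c, 0 ≤ q a b c := by
    intro a b c
    by_cases h : t c = 0
    · simp [hqdef, h]
    · have htpos : 0 < t c := lt_of_le_of_ne (ht0 c) (Ne.symm h)
      simp only [hqdef, if_neg h]
      exact div_nonneg (mul_nonneg (hr0 a c) (hs0 b c)) (le_of_lt htpos)
  have hqpos : ∀ a b c, P a b c ≠ 0 → q a b c ≠ 0 := by
    intro a b c h
    have hPpos : 0 < P a b c := lt_of_le_of_ne (hP a b c) (Ne.symm h)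
    have hrpos : 0 < r a c := lt_of_lt_of_le hPpos (hPr a b c)
    have hspos : 0 < s b c := lt_of_lt_of_le hPpos (hPs a b c)
    have htpos : 0 < t c := lt_of_lt_of_le hrpos (hrt a c)
    simp only [hqdef, if_neg (ne_of_gt htpos)]
    exact ne_of_gt (div_pos (mul_pos hrpos hspos) htpos)
  -- apply klsum on the product type
  have main := klsum (ι := A × B × C) (fun x => P x.1 x.2.1 x.2.2) (fun x => q x.1 x.2.1 x.2.2)
    (fun x => hP _ _ _) (fun x => hq0 _ _ _) (fun x => hqpos _ _ _) ?hsum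
  case hsum =>
    rw [Fintype.sum_prod_type, Fintype.sum_prod_type]
    simp only [Fintype.sum_prod_type]
    have h1 : ∀ c, ∑ a, ∑ b, q a b c ≤ t c := by
      intro c
      by_cases h : t c = 0
      · simp only [hqdef, if_pos h]; simp [h, ht0 c]
      · have : ∑ a, ∑ b, q a b c = t c := by
          simp only [hqdef, if_neg h]
          have : ∀ a, ∑ b, r a c * s b c / t c = r a c * t c / t c := by
            intro a
            rw [← Finset.sum_div, ← Finset.mul_sum, hts c]
          rw [Finset.sum_congr rfl (fun a _ => this a)]
          have : ∀ a, r a c * t c / t c = r a c := by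
            intro a; field_simp
          rw [Finset.sum_congr rfl (fun a _ => this a), htr c]
        exact le_of_eq this
    calc ∑ a, ∑ b, ∑ c, q a b c = ∑ a, ∑ c, ∑ b, q a b c :=
            Finset.sum_congr rfl (fun a _ => Finset.sum_comm)
      _ = ∑ c, ∑ a, ∑ b, q a b c := Finset.sum_comm
      _ ≤ ∑ c, t c := Finset.sum_le_sum (fun c _ => h1 c)
      _ = ∑ c, ∑ a, ∑ b, P a b c := rfl
      _ = ∑ a, ∑ c, ∑ b, P a b c := Finset.sum_comm
      _ = ∑ a, ∑ b, ∑ c, P a b c := Finset.sum_congr rfl (fun a _ => Finset.sum_comm)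
  -- rewrite main into entropy form
  have hlogq : ∀ x : A × B × C, P x.1 x.2.1 x.2.2 * log (q x.1 x.2.1 x.2.2) =
      P x.1 x.2.1 x.2.2 * log (r x.1 x.2.2) + P x.1 x.2.1 x.2.2 * log (s x.2.1 x.2.2)
        - P x.1 x.2.1 x.2.2 * log (t x.2.2) := by
    rintro ⟨a, b, c⟩
    by_cases h : P a b c = 0
    · simp [h]
    · have hPpos : 0 < P a b c := lt_of_le_of_ne (hP a b c) (Ne.symm h)
      have hrpos : 0 < r a c := lt_of_lt_of_le hPpos (hPr a b c)
      have hspos : 0 < s b c := lt_of_lt_of_le hPpos (hPs a b c)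
      have htpos : 0 < t c := lt_of_lt_of_le hrpos (hrt a c)
      simp only [hqdef, if_neg (ne_of_gt htpos)]
      rw [Real.log_div (by positivity) (ne_of_gt htpos), Real.log_mul (ne_of_gt hrpos) (ne_of_gt hspos)]
      ring
  replace main : (∑ x : A × B × C, P x.1 x.2.1 x.2.2 * log (q x.1 x.2.1 x.2.2)) ≤
      ∑ x : A × B × C, P x.1 x.2.1 x.2.2 * log (P x.1 x.2.1 x.2.2) := main
  rw [Finset.sum_congr rfl (fun x _ => hlogq x)] at main
  rw [Finset.sum_sub_distrib, Finset.sum_add_distrib] at main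
  have tripl : ∀ f : A → B → C → ℝ, ∑ x : A × B × C, f x.1 x.2.1 x.2.2 = ∑ a, ∑ b, ∑ c, f a b c := by
    intro f
    rw [Fintype.sum_prod_type]
    exact Finset.sum_congr rfl (fun a _ => by rw [Fintype.sum_prod_type])
  rw [tripl (fun a b c => P a b c * log (r a c)), tripl (fun a b c => P a b c * log (s b c)),
    tripl (fun a b c => P a b c * log (t c)), tripl (fun a b c => P a b c * log (P a b c))] at main
  have e1 : ∑ a, ∑ b, ∑ c, P a b c * log (r a c) = ∑ a, ∑ c, r a c * log (r a c) := by
    refine Finset.sum_congr rfl (fun a _ => ?_)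
    rw [Finset.sum_comm]
    refine Finset.sum_congr rfl (fun c _ => ?_)
    rw [← Finset.sum_mul]
  have e2 : ∑ a, ∑ b, ∑ c, P a b c * log (s b c) = ∑ b, ∑ c, s b c * log (s b c) := by
    rw [Finset.sum_comm]
    refine Finset.sum_congr rfl (fun b _ => ?_)
    rw [Finset.sum_comm]
    refine Finset.sum_congr rfl (fun c _ => ?_)
    rw [← Finset.sum_mul]
  have e3 : ∑ a, ∑ b, ∑ c, P a b c * log (t c) = ∑ c, t c * log (t c) := by
    calc ∑ a, ∑ b, ∑ c, P a b c * log (t c) = ∑ a, ∑ c, ∑ b, P a b c * log (t c) :=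
          Finset.sum_congr rfl (fun a _ => Finset.sum_comm)
      _ = ∑ c, ∑ a, ∑ b, P a b c * log (t c) := Finset.sum_comm
      _ = ∑ c, t c * log (t c) := by
          refine Finset.sum_congr rfl (fun c _ => ?_)
          have h2 : (∑ a, ∑ b, P a b c) * log (t c) = ∑ a, ∑ b, P a b c * log (t c) := by
            rw [Finset.sum_mul]
            exact Finset.sum_congr rfl (fun a _ => by rw [Finset.sum_mul])
          rw [← h2]
  rw [e1, e2, e3] at main
  simp only [negMulLog, neg_mul, Finset.sum_neg_distrib]
  linarith [main]

end SMDC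

namespace SMDC

variable {Ω : Type*} [MeasurableSpace Ω] (μ : Measure Ω) [IsProbabilityMeasure μ]

section EntBasic

lemma entH_eq {S : Type*} [Fintype S] (Y : Ω → S) :
    entH μ Y = ∑ s : S, Real.negMulLog (pm μ Y s) := rfl

lemma entH_nonneg {S : Type*} [Fintype S] (Y : Ω → S) : 0 ≤ entH μ Y :=
  Finset.sum_nonneg fun s _ => negMulLog_nonneg (pm_nonneg μ Y s) (pm_le_one μ Y s)

variable {S S' : Type*} [Fintype S] [Fintype S'] [MeasurableSpace S] [MeasurableSingletonClass S]

lemma entH_comp_le {Y : Ω → S} (hY : Measurable Y) (g : S → S') :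
    entH μ (fun ω => g (Y ω)) ≤ entH μ Y := by
  rw [entH_eq, entH_eq]
  have key : ∀ t : S', negMulLog (pm μ (fun ω => g (Y ω)) t) ≤
      ∑ s ∈ Finset.univ.filter (fun s => g s = t), negMulLog (pm μ Y s) := by
    intro t
    rw [pm_comp μ hY g t]
    exact negMulLog_sum_le _ _ (fun s _ => pm_nonneg μ Y s)
  calc ∑ t : S', negMulLog (pm μ (fun ω => g (Y ω)) t)
      ≤ ∑ t : S', ∑ s ∈ Finset.univ.filter (fun s => g s = t), negMulLog (pm μ Y s) :=
        Finset.sum_le_sum (fun t _ => key t)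
    _ = ∑ s : S, negMulLog (pm μ Y s) := by
        rw [← Finset.sum_fiberwise (Finset.univ : Finset S) g (fun s => negMulLog (pm μ Y s))]

lemma entH_comp_inj {Y : Ω → S} (g : S → S') (hg : Function.Injective g) :
    entH μ (fun ω => g (Y ω)) = entH μ Y := by
  rw [entH_eq, entH_eq]
  have h1 : ∀ s : S, pm μ (fun ω => g (Y ω)) (g s) = pm μ Y s := by
    intro s
    have : (fun ω => g (Y ω)) ⁻¹' {g s} = Y ⁻¹' {s} := by
      ext ω; simp [hg.eq_iff]
    rw [pm, this]; rfl
  have h2 : ∀ t : S', t ∉ Finset.univ.image g → negMulLog (pm μ (fun ω => g (Y ω)) t) = 0 := by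
    intro t ht
    have : (fun ω => g (Y ω)) ⁻¹' {t} = ∅ := by
      ext ω; simp only [Set.mem_preimage, Set.mem_singleton_iff, Set.mem_empty_iff_false,
        iff_false]
      intro h
      exact ht (Finset.mem_image.2 ⟨Y ω, Finset.mem_univ _, h⟩)
    rw [pm, this]
    simp [negMulLog]
  rw [← Finset.sum_subset (Finset.subset_univ (Finset.univ.image g))
    (fun t _ ht => h2 t ht)]
  rw [Finset.sum_image (fun a _ b _ h => hg h)]
  exact Finset.sum_congr rfl (fun s _ => by rw [h1 s])

lemma pm_fiber {T2 ι : Type*} [Fintype ι] {Y : Ω → S} (hY : Measurable Y) (Z : Ω → T2)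
    (e : ι → S) (he : Function.Injective e) (z : T2)
    (h : Z ⁻¹' {z} = ⋃ i : ι, Y ⁻¹' {e i}) : pm μ Z z = ∑ i, pm μ Y (e i) := by
  have hd : Pairwise (Function.onFun Disjoint fun i => Y ⁻¹' {e i}) := by
    intro i j hij
    refine Set.disjoint_left.2 (fun ω hi hj => hij ?_)
    simp only [Set.mem_preimage, Set.mem_singleton_iff] at hi hj
    exact he (hi ▸ hj ▸ rfl)
  have hm := measure_iUnion (μ := μ) hd (fun i => hY (measurableSet_singleton _))
  rw [← h] at hm
  rw [pm, hm, tsum_fintype, ENNReal.toReal_sum (fun i _ => measure_preimage_ne_top μ _)]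
  rfl

end EntBasic

section EntPair

variable {TA TB TC : Type*} [Fintype TA] [Fintype TB] [Fintype TC]
  [MeasurableSpace TA] [MeasurableSingletonClass TA]
  [MeasurableSpace TB] [MeasurableSingletonClass TB]
  [MeasurableSpace TC] [MeasurableSingletonClass TC]
  {A : Ω → TA} {B : Ω → TB} {C : Ω → TC}

lemma entH_submod (hA : Measurable A) (hB : Measurable B) (hC : Measurable C) :
    entH μ (fun ω => (A ω, (B ω, C ω))) + entH μ C ≤
      entH μ (fun ω => (A ω, C ω)) + entH μ (fun ω => (B ω, C ω)) := by
  have hABC : Measurable (fun ω => (A ω, (B ω, C ω))) := hA.prodMk (hB.prodMk hC)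
  set P : TA → TB → TC → ℝ := fun a b c => pm μ (fun ω => (A ω, (B ω, C ω))) (a, (b, c)) with hP
  have hP0 : ∀ a b c, 0 ≤ P a b c := fun a b c => pm_nonneg μ _ _
  have m1 : ∀ a c, pm μ (fun ω => (A ω, C ω)) (a, c) = ∑ b, P a b c := by
    intro a c
    refine pm_fiber μ hABC _ (fun b => (a, (b, c))) (fun b b' h => by simpa [Prod.ext_iff] using h) (a, c) ?_
    ext ω
    simp only [Set.mem_preimage, Set.mem_singleton_iff, Set.mem_iUnion, Prod.mk.injEq]
    constructor
    · rintro ⟨h1, h2⟩; exact ⟨B ω, h1, rfl, h2⟩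
    · rintro ⟨b, h1, _, h2⟩; exact ⟨h1, h2⟩
  have m2 : ∀ b c, pm μ (fun ω => (B ω, C ω)) (b, c) = ∑ a, P a b c := by
    intro b c
    refine pm_fiber μ hABC _ (fun a => (a, (b, c))) (fun a a' h => by simpa [Prod.ext_iff] using h) (b, c) ?_
    ext ω
    simp only [Set.mem_preimage, Set.mem_singleton_iff, Set.mem_iUnion, Prod.mk.injEq]
    constructor
    · rintro ⟨h1, h2⟩; exact ⟨A ω, rfl, h1, h2⟩
    · rintro ⟨a, _, h1, h2⟩; exact ⟨h1, h2⟩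
  have m3 : ∀ c, pm μ C c = ∑ a, ∑ b, P a b c := by
    intro c
    have := pm_fiber μ hABC C (fun x : TA × TB => (x.1, (x.2, c)))
      (fun x x' h => by
        simp only [Prod.mk.injEq] at h
        exact Prod.ext h.1 h.2.1) c ?_
    · rw [this, Fintype.sum_prod_type]
    · ext ω
      simp only [Set.mem_preimage, Set.mem_singleton_iff, Set.mem_iUnion, Prod.mk.injEq]
      constructor
      · intro h1; exact ⟨(A ω, B ω), rfl, rfl, h1⟩
      · rintro ⟨x, _, _, h1⟩; exact h1
  have main := submod_pure P hP0
  have E1 : entH μ (fun ω => (A ω, (B ω, C ω))) = ∑ a, ∑ b, ∑ c, negMulLog (P a b c) := by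
    rw [entH_eq, Fintype.sum_prod_type]
    exact Finset.sum_congr rfl (fun a _ => by rw [Fintype.sum_prod_type])
  have E2 : entH μ (fun ω => (A ω, C ω)) = ∑ a, ∑ c, negMulLog (∑ b, P a b c) := by
    rw [entH_eq, Fintype.sum_prod_type]
    exact Finset.sum_congr rfl (fun a _ => Finset.sum_congr rfl (fun c _ => by rw [m1 a c]))
  have E3 : entH μ (fun ω => (B ω, C ω)) = ∑ b, ∑ c, negMulLog (∑ a, P a b c) := by
    rw [entH_eq, Fintype.sum_prod_type]
    exact Finset.sum_congr rfl (fun b _ => Finset.sum_congr rfl (fun c _ => by rw [m2 b c]))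
  have E4 : entH μ C = ∑ c, negMulLog (∑ a, ∑ b, P a b c) := by
    rw [entH_eq]
    exact Finset.sum_congr rfl (fun c _ => by rw [m3 c])
  rw [E1, E2, E3, E4]
  exact main

lemma entH_pair_indep (hA : Measurable A) (hB : Measurable B) (h : IndepFun A B μ) :
    entH μ (fun ω => (A ω, B ω)) = entH μ A + entH μ B := by
  have hpm : ∀ a b, pm μ (fun ω => (A ω, B ω)) (a, b) = pm μ A a * pm μ B b := by
    intro a b
    have hind := h.measure_inter_preimage_eq_mul {a} {b} (measurableSet_singleton _)
      (measurableSet_singleton _)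
    have hpre : (fun ω => (A ω, B ω)) ⁻¹' {(a, b)} = A ⁻¹' {a} ∩ B ⁻¹' {b} := by
      ext ω; simp [Prod.ext_iff]
    rw [pm, hpre, hind, ENNReal.toReal_mul]; rfl
  rw [entH_eq, entH_eq, entH_eq, Fintype.sum_prod_type]
  have : ∀ a, ∑ b, negMulLog (pm μ (fun ω => (A ω, B ω)) (a, b)) =
      ∑ b, (pm μ B b * negMulLog (pm μ A a) + pm μ A a * negMulLog (pm μ B b)) := by
    intro a
    refine Finset.sum_congr rfl (fun b _ => ?_)
    rw [hpm a b, negMulLog_mul]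
  rw [Finset.sum_congr rfl (fun a _ => this a)]
  have expand : ∀ a, ∑ b, (pm μ B b * negMulLog (pm μ A a) + pm μ A a * negMulLog (pm μ B b))
      = negMulLog (pm μ A a) + pm μ A a * entH μ B := by
    intro a
    rw [Finset.sum_add_distrib, ← Finset.sum_mul, sum_pm μ hB, ← Finset.mul_sum, one_mul,
      entH_eq]
  rw [Finset.sum_congr rfl (fun a _ => expand a)]
  rw [Finset.sum_add_distrib, ← Finset.sum_mul, sum_pm μ hA, one_mul, entH_eq]

end EntPair

section HFun

variable {Ω : Type*} [MeasurableSpace Ω] (μ : Measure Ω) [IsProbabilityMeasure μ]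
variable {L : ℕ} {V : Fin L → Type*} [∀ i, Fintype (V i)] [∀ i, MeasurableSpace (V i)]
  [∀ i, MeasurableSingletonClass (V i)] {X : ∀ i, Ω → V i}
variable {TW : Type*} [Fintype TW] [MeasurableSpace TW] [MeasurableSingletonClass TW]
  {W : Ω → TW}

lemma measurable_jointOn (hX : ∀ i, Measurable (X i)) (U : Finset (Fin L)) :
    Measurable (jointOn X U) :=
  measurable_pi_lambda _ (fun i => hX i)

/-- conditional entropy of the joint of `X` over `U`, given `W` -/
noncomputable def hf (U : Finset (Fin L)) : ℝ :=
  entH μ (fun ω => (jointOn X U ω, W ω)) - entH μ W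

lemma hf_empty : hf μ (X := X) (W := W) (∅ : Finset (Fin L)) = 0 := by
  have hg : Function.Injective
      (fun p : ((i : (∅ : Finset (Fin L))) → V i) × TW => p.2) := by
    rintro ⟨f, w⟩ ⟨f', w'⟩ h
    simp only at h
    refine Prod.ext ?_ h
    funext i
    exact (Finset.notMem_empty _ i.2).elim
  have h := entH_comp_inj μ
    (Y := fun ω => (jointOn X (∅ : Finset (Fin L)) ω, W ω)) _ hg
  rw [hf, ← h]
  simp

lemma entH_pair_insert (v : Fin L) (A : Finset (Fin L)) :
    entH μ (fun ω => (jointOn X (insert v A) ω, W ω)) =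
      entH μ (fun ω => (X v ω, (jointOn X A ω, W ω))) := by
  have hg : Function.Injective
      (fun p : ((i : (insert v A : Finset (Fin L))) → V i) × TW =>
        (p.1 ⟨v, Finset.mem_insert_self v A⟩,
          ((fun i : A => p.1 ⟨i.1, Finset.mem_insert_of_mem i.2⟩), p.2))) := by
    rintro ⟨f, w⟩ ⟨f', w'⟩ h
    simp only [Prod.mk.injEq] at h
    obtain ⟨h1, h2, h3⟩ := h
    refine Prod.ext ?_ h3
    simp only
    funext j
    rcases Finset.mem_insert.1 j.2 with hj | hj
    · have hje : j = ⟨v, Finset.mem_insert_self v A⟩ := Subtype.ext hj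
      rw [hje]; exact h1
    · have hje : j = ⟨j.1, Finset.mem_insert_of_mem hj⟩ := Subtype.ext rfl
      rw [hje]
      exact congrFun h2 ⟨j.1, hj⟩
  exact (entH_comp_inj μ
    (Y := fun ω => (jointOn X (insert v A) ω, W ω)) _ hg).symm

lemma entH_pair_subset_le (hX : ∀ i, Measurable (X i)) (hW : Measurable W)
    {A B : Finset (Fin L)} (hAB : A ⊆ B) :
    entH μ (fun ω => (jointOn X A ω, W ω)) ≤ entH μ (fun ω => (jointOn X B ω, W ω)) := by
  have h := entH_comp_le μ
    (Y := fun ω => (jointOn X B ω, W ω))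
    ((measurable_jointOn hX B).prodMk hW)
    (fun p => ((fun i : A => p.1 ⟨i.1, hAB i.2⟩), p.2))
  exact h

lemma hf_mono (hX : ∀ i, Measurable (X i)) (hW : Measurable W)
    {A B : Finset (Fin L)} (hAB : A ⊆ B) :
    hf μ (X := X) (W := W) A ≤ hf μ (X := X) (W := W) B :=
  sub_le_sub_right (entH_pair_subset_le μ hX hW hAB) _

lemma hf_nonneg (hX : ∀ i, Measurable (X i)) (hW : Measurable W) (U : Finset (Fin L)) :
    0 ≤ hf μ (X := X) (W := W) U := by
  have := hf_mono μ hX hW (Finset.empty_subset U)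
  rwa [hf_empty] at this

lemma hf_submod (hX : ∀ i, Measurable (X i)) (hW : Measurable W)
    (v : Fin L) {A B : Finset (Fin L)} (hAB : A ⊆ B) :
    hf μ (X := X) (W := W) (insert v B) + hf μ (X := X) (W := W) A ≤
      hf μ (X := X) (W := W) (insert v A) + hf μ (X := X) (W := W) B := by
  have hsub := entH_submod μ (A := X v) (B := jointOn X B)
    (C := fun ω => (jointOn X A ω, W ω)) (hX v) (measurable_jointOn hX B)
    ((measurable_jointOn hX A).prodMk hW)
  replace hsub : entH μ (fun ω => (X v ω, (jointOn X B ω, (jointOn X A ω, W ω)))) +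
      entH μ (fun ω => (jointOn X A ω, W ω)) ≤
      entH μ (fun ω => (X v ω, (jointOn X A ω, W ω))) +
      entH μ (fun ω => (jointOn X B ω, (jointOn X A ω, W ω))) := hsub
  -- rewrite the four entropies
  have r1 : entH μ (fun ω => (X v ω, (jointOn X B ω, (jointOn X A ω, W ω)))) =
      entH μ (fun ω => (jointOn X (insert v B) ω, W ω)) := by
    have hg : Function.Injective
        (fun p : V v × (((i : B) → V i) × TW) =>
          (p.1, (p.2.1, ((fun i : A => p.2.1 ⟨i.1, hAB i.2⟩), p.2.2)))) := by
      rintro ⟨x, f, w⟩ ⟨x', f', w'⟩ h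
      simp only [Prod.mk.injEq] at h
      exact Prod.ext h.1 (Prod.ext h.2.1 h.2.2.2)
    have h := entH_comp_inj μ (Y := fun ω => (X v ω, (jointOn X B ω, W ω))) _ hg
    exact h.trans (entH_pair_insert μ v B).symm
  have r2 : entH μ (fun ω => (jointOn X B ω, (jointOn X A ω, W ω))) =
      entH μ (fun ω => (jointOn X B ω, W ω)) := by
    have hg : Function.Injective
        (fun p : ((i : B) → V i) × TW =>
          (p.1, ((fun i : A => p.1 ⟨i.1, hAB i.2⟩), p.2))) := by
      rintro ⟨f, w⟩ ⟨f', w'⟩ h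
      simp only [Prod.mk.injEq] at h
      exact Prod.ext h.1 h.2.2
    exact entH_comp_inj μ (Y := fun ω => (jointOn X B ω, W ω)) _ hg
  have r3 : entH μ (fun ω => (X v ω, (jointOn X A ω, W ω))) =
      entH μ (fun ω => (jointOn X (insert v A) ω, W ω)) := (entH_pair_insert μ v A).symm
  rw [r1, r2, r3] at hsub
  simp only [hf]
  linarith

/-- fractional covering bound (Madiman–Tetali style) for `hf` -/
lemma hf_cover (hX : ∀ i, Measurable (X i)) (hW : Measurable W) :
    ∀ (U : Finset (Fin L)) (u : Fin L → ℝ), (∀ x, 0 ≤ u x) → ∀ τ : ℝ, 0 ≤ τ →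
      (∀ l ∈ U, τ ≤ ∑ x ∈ U.erase l, u x) →
      τ * hf μ (X := X) (W := W) U ≤ ∑ x ∈ U, u x * hf μ (X := X) (W := W) (U.erase x) := by
  intro U
  induction U using Finset.strongInduction with
  | _ U IH =>
    intro u hu τ hτ hcov
    rcases Finset.eq_empty_or_nonempty U with rfl | ⟨v, hv⟩
    · simp [hf_empty]
    · set U' := U.erase v with hU'
      have hU'ss : U' ⊂ U := Finset.erase_ssubset hv
      have hins : insert v U' = U := Finset.insert_erase hv
      set τ' := max (τ - u v) 0 with hτ'
      have hcov' : ∀ l ∈ U', τ' ≤ ∑ x ∈ U'.erase l, u x := by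
        intro l hl
        have hlU : l ∈ U := Finset.mem_of_mem_erase hl
        have hlv : l ≠ v := Finset.ne_of_mem_erase hl
        have h1 : U.erase l = insert v (U'.erase l) := by
          rw [hU', Finset.erase_right_comm, Finset.insert_erase]
          exact Finset.mem_erase.2 ⟨Ne.symm hlv, hv⟩
        have h2 := hcov l hlU
        have hvnot : v ∉ U'.erase l := fun hmem =>
          (Finset.notMem_erase v U) (Finset.mem_of_mem_erase hmem)
        rw [h1, Finset.sum_insert hvnot] at h2
        refine max_le (by linarith) (Finset.sum_nonneg (fun x _ => hu x))
      have hIH := IH U' hU'ss u hu τ' (le_max_right _ _) hcov'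
      have hsumU' : τ ≤ ∑ x ∈ U', u x := by
        have := hcov v hv
        rwa [← hU'] at this
      have hkey : ∀ x ∈ U', hf μ (X := X) (W := W) (U'.erase x) +
          hf μ (X := X) (W := W) U - hf μ (X := X) (W := W) U' ≤
          hf μ (X := X) (W := W) (U.erase x) := by
        intro x hx
        have hxv : x ≠ v := Finset.ne_of_mem_erase hx
        have h1 : U.erase x = insert v (U'.erase x) := by
          rw [hU', Finset.erase_right_comm, Finset.insert_erase]
          exact Finset.mem_erase.2 ⟨Ne.symm hxv, hv⟩
        have hsub := hf_submod μ hX hW v (Finset.erase_subset x U')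
        rw [hins, ← h1] at hsub
        linarith
      have hmono := hf_mono μ hX hW (Finset.subset_insert v U')
      rw [hins] at hmono
      have hUnn := hf_nonneg μ hX hW U'
      calc τ * hf μ (X := X) (W := W) U
          ≤ u v * hf μ (X := X) (W := W) U' + τ' * hf μ (X := X) (W := W) U' +
            τ * (hf μ (X := X) (W := W) U - hf μ (X := X) (W := W) U') := by
            have h1 : τ ≤ u v + τ' := by
              have := le_max_left (τ - u v) 0
              linarith
            have h2 := mul_le_mul_of_nonneg_right h1 hUnn
            nlinarith [h2]
        _ ≤ u v * hf μ (X := X) (W := W) U' + τ' * hf μ (X := X) (W := W) U' +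
            (∑ x ∈ U', u x) * (hf μ (X := X) (W := W) U - hf μ (X := X) (W := W) U') := by
            have h3 := mul_le_mul_of_nonneg_right hsumU' (sub_nonneg.2 hmono)
            linarith
        _ ≤ u v * hf μ (X := X) (W := W) U' + (∑ x ∈ U', u x * hf μ (X := X) (W := W) (U'.erase x)) +
            (∑ x ∈ U', u x) * (hf μ (X := X) (W := W) U - hf μ (X := X) (W := W) U') := by
            linarith [hIH]
        _ ≤ ∑ x ∈ U, u x * hf μ (X := X) (W := W) (U.erase x) := by
            have hvU' : v ∉ U' := by simp [hU']
            rw [← hins, Finset.sum_insert hvU', Finset.erase_insert hvU']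
            have hpt : ∀ x ∈ U', u x * hf μ (X := X) (W := W) (U'.erase x) +
                u x * (hf μ (X := X) (W := W) U - hf μ (X := X) (W := W) U') ≤
                u x * hf μ (X := X) (W := W) ((insert v U').erase x) := by
              intro x hx
              have h4 := hkey x hx
              rw [hins]
              have h5 := mul_le_mul_of_nonneg_left h4 (hu x)
              nlinarith [h5]
            have hsum2 := Finset.sum_le_sum hpt
            rw [Finset.sum_add_distrib] at hsum2
            have hrw : ∑ x ∈ U', u x * (hf μ (X := X) (W := W) U - hf μ (X := X) (W := W) U') =
                (∑ x ∈ U', u x) * (hf μ (X := X) (W := W) U - hf μ (X := X) (W := W) U') := by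
              rw [Finset.sum_mul]
            rw [hrw] at hsum2
            rw [hins] at hsum2 ⊢
            linarith

end HFun

end SMDC

namespace SMDC

variable {L : ℕ} (lam : Fin L → ℝ)

/-- water-filling set -/
def Sset (α : ℕ) : Set ℝ := {F : ℝ | 0 ≤ F ∧ (α : ℝ) * F ≤ ∑ l, min (lam l) F}

/-- water level -/
noncomputable def Glev (α : ℕ) : ℝ := sSup (Sset lam α)

lemma zero_mem_Sset (hlam : ∀ l, 0 ≤ lam l) (α : ℕ) : (0 : ℝ) ∈ Sset lam α := by
  constructor
  · exact le_rfl
  · simp only [mul_zero]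
    refine Finset.sum_nonneg (fun l _ => ?_)
    exact le_min (hlam l) le_rfl

lemma Sset_bddAbove {α : ℕ} (hα : 1 ≤ α) : BddAbove (Sset lam α) := by
  refine ⟨∑ l, lam l, fun F hF => ?_⟩
  obtain ⟨h0, h1⟩ := hF
  have h2 : F ≤ (α : ℝ) * F := by
    have hc : (1:ℝ) ≤ (α:ℝ) := by exact_mod_cast hα
    nlinarith
  have h3 : ∑ l, min (lam l) F ≤ ∑ l, lam l :=
    Finset.sum_le_sum (fun l _ => min_le_left _ _)
  linarith

lemma Sset_closed (α : ℕ) : IsClosed (Sset lam α) := by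
  have h1 : IsClosed {F : ℝ | 0 ≤ F} := isClosed_le continuous_const continuous_id
  have h2 : IsClosed {F : ℝ | (α : ℝ) * F ≤ ∑ l, min (lam l) F} := by
    refine isClosed_le (by continuity) ?_
    exact continuous_finset_sum _ (fun l _ => (continuous_const.min continuous_id))
  exact h1.inter h2

lemma Glev_mem (hlam : ∀ l, 0 ≤ lam l) {α : ℕ} (hα : 1 ≤ α) : Glev lam α ∈ Sset lam α :=
  (Sset_closed lam α).csSup_mem ⟨0, zero_mem_Sset lam hlam α⟩ (Sset_bddAbove lam hα)

lemma Glev_nonneg (hlam : ∀ l, 0 ≤ lam l) {α : ℕ} (hα : 1 ≤ α) : 0 ≤ Glev lam α := (Glev_mem lam hlam hα).1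

lemma le_Glev {α : ℕ} (hα : 1 ≤ α) {F : ℝ} (hF : F ∈ Sset lam α) : F ≤ Glev lam α :=
  le_csSup (Sset_bddAbove lam hα) hF

/-- the water identity -/
lemma Glev_eq (hlam : ∀ l, 0 ≤ lam l) {α : ℕ} (hα : 1 ≤ α) :
    (α : ℝ) * Glev lam α = ∑ l, min (lam l) (Glev lam α) := by
  set G := Glev lam α with hG
  have hmem := Glev_mem lam hlam hα
  refine le_antisymm hmem.2 ?_
  by_contra hlt
  push_neg at hlt
  set d := ∑ l, min (lam l) G - (α : ℝ) * G with hd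
  have hdpos : 0 < d := by simp only [hd]; linarith
  set ε := d / (α + 1) with hε
  have hεpos : 0 < ε := by
    apply div_pos hdpos
    positivity
  have hmono : ∑ l, min (lam l) G ≤ ∑ l, min (lam l) (G + ε) :=
    Finset.sum_le_sum (fun l _ => le_min (min_le_left _ _)
      (le_trans (min_le_right _ _) (by linarith)))
  have hmem2 : G + ε ∈ Sset lam α := by
    constructor
    · have := hmem.1; linarith
    · have hcast : (0:ℝ) < (α:ℝ) + 1 := by positivity
      have h1 : (α : ℝ) * ε ≤ d * ((α:ℝ) / ((α:ℝ)+1)) := by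
        rw [hε]
        field_simp
        exact le_of_eq (by ring)
      have h2 : d * ((α:ℝ)/((α:ℝ)+1)) < d := by
        have : (α:ℝ)/((α:ℝ)+1) < 1 := by
          rw [div_lt_one hcast]; linarith
        nlinarith
      have : (α : ℝ) * (G + ε) < (α:ℝ) * G + d := by
        rw [mul_add]; linarith
      calc (α : ℝ) * (G + ε) ≤ (α:ℝ)*G + d := le_of_lt this
        _ = ∑ l, min (lam l) G := by rw [hd]; ring
        _ ≤ ∑ l, min (lam l) (G + ε) := hmono
  have := le_Glev lam hα hmem2
  linarith

lemma Glev_antitone (hlam : ∀ l, 0 ≤ lam l) {α : ℕ} (hα : 1 ≤ α) : Glev lam (α + 1) ≤ Glev lam α := by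
  refine le_Glev lam hα ?_
  have hmem := Glev_mem lam hlam (le_trans hα (Nat.le_succ α))
  obtain ⟨h0, h1⟩ := hmem
  constructor
  · exact h0
  · push_cast at h1 ⊢
    nlinarith

end SMDC

-- appended to comb.lean for testing
namespace SMDC2
open SMDC

variable {L : ℕ} (lam : Fin L → ℝ)

lemma degsum (α : ℕ) (c : Finset (Fin L) → ℝ) :
    ∑ l, ∑ U ∈ (OmegaL L α).filter (fun U => l ∈ U), c U
      = (α : ℝ) * ∑ U ∈ OmegaL L α, c U := by
  have h1 : ∀ l : Fin L, ∑ U ∈ (OmegaL L α).filter (fun U => l ∈ U), c U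
      = ∑ U ∈ OmegaL L α, if l ∈ U then c U else 0 := fun l => Finset.sum_filter _ _
  rw [Finset.sum_congr rfl (fun l _ => h1 l), Finset.sum_comm, Finset.mul_sum]
  refine Finset.sum_congr rfl (fun U hU => ?_)
  have hcard : U.card = α := (Finset.mem_powersetCard.1 hU).2
  rw [Finset.sum_ite_mem, Finset.univ_inter, Finset.sum_const, nsmul_eq_mul, hcard]

lemma feas_total_le (hlam : ∀ l, 0 ≤ lam l) {α : ℕ} (hα : 1 ≤ α) {c : Finset (Fin L) → ℝ}
    (hc0 : ∀ U ∈ OmegaL L α, 0 ≤ c U)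
    (hcle : ∀ l, ∑ U ∈ (OmegaL L α).filter (fun U => l ∈ U), c U ≤ lam l) :
    ∑ U ∈ OmegaL L α, c U ≤ Glev lam α := by
  set T := ∑ U ∈ OmegaL L α, c U with hT
  have hT0 : 0 ≤ T := Finset.sum_nonneg hc0
  refine le_Glev lam hα ⟨hT0, ?_⟩
  have hdeg_le : ∀ l, ∑ U ∈ (OmegaL L α).filter (fun U => l ∈ U), c U ≤ min (lam l) T := by
    intro l
    refine le_min (hcle l) ?_
    exact Finset.sum_le_sum_of_subset_of_nonneg (Finset.filter_subset _ _)
      (fun U hU _ => hc0 U hU)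
  calc (α : ℝ) * T = ∑ l, ∑ U ∈ (OmegaL L α).filter (fun U => l ∈ U), c U :=
        (degsum α c).symm
    _ ≤ ∑ l, min (lam l) T := Finset.sum_le_sum (fun l _ => hdeg_le l)

lemma fLP_le_Glev (hlam : ∀ l, 0 ≤ lam l) {α : ℕ} (hα : 1 ≤ α) :
    fLP L lam α ≤ Glev lam α := by
  refine Real.sSup_le ?_ (Glev_nonneg lam hlam hα)
  rintro x ⟨c, h0, h1, rfl⟩
  exact feas_total_le lam hlam hα h0 h1

lemma Glev_le_fLP (hlam : ∀ l, 0 ≤ lam l) {α : ℕ} (hα : 1 ≤ α) {c : Finset (Fin L) → ℝ}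
    (hc0 : ∀ U ∈ OmegaL L α, 0 ≤ c U)
    (hcle : ∀ l, ∑ U ∈ (OmegaL L α).filter (fun U => l ∈ U), c U ≤ lam l)
    (htot : ∑ U ∈ OmegaL L α, c U = Glev lam α) :
    Glev lam α ≤ fLP L lam α := by
  have hbdd : BddAbove { x : ℝ | ∃ c : Finset (Fin L) → ℝ,
      (∀ U ∈ OmegaL L α, 0 ≤ c U) ∧
      (∀ l : Fin L, ∑ U ∈ (OmegaL L α).filter (fun U => l ∈ U), c U ≤ lam l) ∧
      x = ∑ U ∈ OmegaL L α, c U } := by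
    refine ⟨Glev lam α, ?_⟩
    rintro x ⟨c, h0, h1, rfl⟩
    exact feas_total_le lam hlam hα h0 h1
  refine le_csSup hbdd ?_
  exact ⟨c, hc0, hcle, htot.symm⟩

lemma pair_reindex (α : ℕ) (F : Finset (Fin L) → Fin L → ℝ) :
    ∑ U ∈ OmegaL L α, ∑ x ∈ Finset.univ \ U, F (insert x U) x
      = ∑ V ∈ OmegaL L (α+1), ∑ x ∈ V, F V x := by
  rw [Finset.sum_sigma', Finset.sum_sigma']
  refine Finset.sum_nbij' (fun p => ⟨insert p.2 p.1, p.2⟩) (fun p => ⟨p.1.erase p.2, p.2⟩)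
    ?_ ?_ ?_ ?_ ?_
  · rintro ⟨U, x⟩ hp
    simp only [Finset.mem_sigma, Finset.mem_sdiff, Finset.mem_univ, true_and] at hp
    obtain ⟨hU, hx⟩ := hp
    simp only [Finset.mem_sigma, Finset.mem_insert_self, and_true]
    rw [OmegaL, Finset.mem_powersetCard] at hU ⊢
    exact ⟨Finset.subset_univ _, by rw [Finset.card_insert_of_notMem hx, hU.2]⟩
  · rintro ⟨V, x⟩ hp
    simp only [Finset.mem_sigma] at hp
    obtain ⟨hV, hx⟩ := hp
    rw [Finset.mem_sigma]
    constructor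
    · rw [OmegaL, Finset.mem_powersetCard] at hV ⊢
      refine ⟨Finset.subset_univ _, ?_⟩
      rw [Finset.card_erase_of_mem hx, hV.2]
      omega
    · simp [Finset.notMem_erase]
  · rintro ⟨U, x⟩ hp
    simp only [Finset.mem_sigma, Finset.mem_sdiff, Finset.mem_univ, true_and] at hp
    simp only [Sigma.mk.inj_iff, heq_eq_eq, and_true]
    exact Finset.erase_insert hp.2
  · rintro ⟨V, x⟩ hp
    simp only [Finset.mem_sigma] at hp
    simp only [Sigma.mk.inj_iff, heq_eq_eq, and_true]
    exact Finset.insert_erase hp.2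
  · rintro ⟨U, x⟩ hp
    rfl

end SMDC2

namespace SMDC3
open SMDC SMDC2

variable {L : ℕ} (lam : Fin L → ℝ)

/-- Properties of a level-`α` canonical solution. -/
def Canon (lam : Fin L → ℝ) (α : ℕ) (c : Finset (Fin L) → ℝ) : Prop :=
  (∀ U ∈ OmegaL L α, 0 ≤ c U) ∧ (∀ U, U ∉ OmegaL L α → c U = 0) ∧
  (∀ l, ∑ U ∈ (OmegaL L α).filter (fun U => l ∈ U), c U = min (lam l) (Glev lam α)) ∧
  (∑ U ∈ OmegaL L α, c U = Glev lam α)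

/-- The Madiman–Tetali style hypothesis on `g` at level `α+1`. -/
def MTH (L : ℕ) (α : ℕ) (g : Finset (Fin L) → ℝ) : Prop :=
  (∀ U ∈ OmegaL L α, 0 ≤ g U) ∧
  (∀ V ∈ OmegaL L (α+1), ∀ u : Fin L → ℝ, (∀ x, 0 ≤ u x) →
    (∀ l ∈ V, (1:ℝ) ≤ ∑ x ∈ V.erase l, u x) → g V ≤ ∑ x ∈ V, u x * g (V.erase x))

/-- The canonical solution at the top level `α = L`. -/
lemma canon_top (hlam : ∀ l, 0 ≤ lam l) (hL : 1 ≤ L) :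
    Canon lam L (fun U => if U = Finset.univ then Glev lam L else 0) := by
  have hmemΩ : (Finset.univ : Finset (Fin L)) ∈ OmegaL L L := by
    rw [OmegaL, Finset.mem_powersetCard]
    exact ⟨Finset.Subset.refl _, by simp⟩
  have hGnn := Glev_nonneg lam hlam hL
  have hGle : ∀ l, Glev lam L ≤ lam l := by
    intro l
    by_contra hcon
    push_neg at hcon
    have hid := Glev_eq lam hlam hL
    have hstrict : ∑ l', min (lam l') (Glev lam L) < ∑ l' : Fin L, Glev lam L := by
      refine Finset.sum_lt_sum (fun i _ => min_le_right _ _) ⟨l, Finset.mem_univ l, ?_⟩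
      exact min_lt_iff.2 (Or.inl hcon)
    rw [Finset.sum_const, Finset.card_univ, Fintype.card_fin, nsmul_eq_mul] at hstrict
    rw [hid] at hstrict
    exact lt_irrefl _ hstrict
  refine ⟨?_, ?_, ?_, ?_⟩
  · intro U _; dsimp only; split_ifs <;> simp [hGnn]
  · intro U hU
    have : U ≠ Finset.univ := by
      intro h; rw [h] at hU; exact hU hmemΩ
    simp [this]
  · intro l
    have hfil : (Finset.univ : Finset (Fin L)) ∈ (OmegaL L L).filter (fun U => l ∈ U) :=
      Finset.mem_filter.2 ⟨hmemΩ, Finset.mem_univ l⟩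
    rw [Finset.sum_ite_eq' ((OmegaL L L).filter (fun U => l ∈ U)) Finset.univ
      (fun _ => Glev lam L)]
    rw [if_pos hfil]
    exact (min_eq_right (hGle l)).symm
  · rw [Finset.sum_ite_eq' (OmegaL L L) Finset.univ (fun _ => Glev lam L), if_pos hmemΩ]

/-- Degenerate step: when the higher level value is `0`. -/
lemma canon_exists_of_deg (hlam : ∀ l, 0 ≤ lam l) {α : ℕ} (hα : 1 ≤ α)
    (hαL : α ≤ L) (hG' : Glev lam (α+1) = 0) :
    ∃ c, Canon lam α c := by
  by_cases hG : Glev lam α = 0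
  · refine ⟨fun _ => 0, fun U _ => le_rfl, fun U _ => rfl, ?_, by simp [hG]⟩
    intro l
    simp only [Finset.sum_const_zero, hG]
    have : min (lam l) 0 = 0 := min_eq_right (hlam l)
    rw [this]
  · -- positive level: G = min positive lam, P = positives, |P| = α
    have hGnn := Glev_nonneg lam hlam hα
    have hGpos : 0 < Glev lam α := lt_of_le_of_ne hGnn (Ne.symm hG)
    set G := Glev lam α with hGdef
    set P := Finset.univ.filter (fun l => 0 < lam l) with hP
    have hminP : ∀ l ∈ P, min (lam l) G ≤ G := fun l _ => min_le_right _ _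
    have hmin0 : ∀ l, l ∉ P → min (lam l) G = 0 := by
      intro l hl
      have : lam l = 0 := by
        simp only [hP, Finset.mem_filter, Finset.mem_univ, true_and, not_lt] at hl
        exact le_antisymm hl (hlam l)
      rw [this]; exact min_eq_left hGnn
    have hid := Glev_eq lam hlam hα
    have hsplit : ∑ l, min (lam l) G = ∑ l ∈ P, min (lam l) G := by
      rw [← Finset.sum_filter_add_sum_filter_not Finset.univ (fun l => 0 < lam l)
        (fun l => min (lam l) G)]
      have : ∑ l ∈ Finset.univ.filter (fun l => ¬ 0 < lam l), min (lam l) G = 0 := by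
        refine Finset.sum_eq_zero (fun l hl => ?_)
        refine hmin0 l ?_
        simp only [hP, Finset.mem_filter, Finset.mem_univ, true_and]
        simp only [Finset.mem_filter, Finset.mem_univ, true_and] at hl
        exact hl
      rw [this, add_zero]
  -- α ≤ |P|
    have hcard1 : (α : ℝ) * G ≤ P.card * G := by
      rw [hid, hsplit]
      calc ∑ l ∈ P, min (lam l) G ≤ ∑ l ∈ P, G := Finset.sum_le_sum hminP
        _ = P.card * G := by rw [Finset.sum_const, nsmul_eq_mul]
    have hαle : α ≤ P.card := by
      by_contra hcon
      push_neg at hcon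
      have : (P.card : ℝ) < (α : ℝ) := by exact_mod_cast hcon
      nlinarith
    -- |P| ≤ α via G' = 0
    have hPne : P.Nonempty := by
      rw [← Finset.card_pos]
      omega
    obtain ⟨v, hvP, hvle⟩ := P.exists_min_image lam hPne
    have hvpos : 0 < lam v := (Finset.mem_filter.1 hvP).2
    have hcardle : P.card ≤ α := by
      by_contra hcon
      push_neg at hcon
      have hmem : lam v ∈ Sset lam (α+1) := by
        constructor
        · exact le_of_lt hvpos
        · have h1 : ∑ l ∈ P, min (lam l) (lam v) = P.card * lam v := by
            rw [Finset.sum_congr rfl (fun l hl => min_eq_right (hvle l hl)), Finset.sum_const,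
              nsmul_eq_mul]
          have h2 : ∑ l, min (lam l) (lam v) = ∑ l ∈ P, min (lam l) (lam v) := by
            rw [← Finset.sum_filter_add_sum_filter_not Finset.univ (fun l => 0 < lam l)
              (fun l => min (lam l) (lam v))]
            have : ∑ l ∈ Finset.univ.filter (fun l => ¬ 0 < lam l), min (lam l) (lam v) = 0 := by
              refine Finset.sum_eq_zero (fun l hl => ?_)
              simp only [Finset.mem_filter, Finset.mem_univ, true_and, not_lt] at hl
              have : lam l = 0 := le_antisymm hl (hlam l)
              rw [this]
              exact min_eq_left (le_of_lt hvpos)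
            rw [this, add_zero]
          rw [h2, h1]
          have hcast : ((α:ℝ)+1) ≤ (P.card : ℝ) := by
            have h5 : (α+1 : ℕ) ≤ P.card := hcon
            exact_mod_cast h5
          push_cast
          nlinarith
      have := le_Glev lam (Nat.le_succ_of_le hα) hmem
      rw [hG'] at this
      linarith
    have hcardeq : P.card = α := le_antisymm hcardle hαle
    -- G = lam v
    have hGlev : G = lam v := by
      have hge : lam v ≤ G := by
        refine le_Glev lam hα ⟨le_of_lt hvpos, ?_⟩
        have h1 : ∑ l ∈ P, min (lam l) (lam v) = P.card * lam v := by
          rw [Finset.sum_congr rfl (fun l hl => min_eq_right (hvle l hl)), Finset.sum_const,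
            nsmul_eq_mul]
        have h2 : ∑ l, min (lam l) (lam v) ≥ ∑ l ∈ P, min (lam l) (lam v) := by
          refine Finset.sum_le_sum_of_subset_of_nonneg (Finset.subset_univ P) ?_
          intro l _ _
          exact le_min (hlam l) (le_of_lt hvpos)
        rw [h1, hcardeq] at h2
        linarith
      have hle : G ≤ lam v := by
        by_contra hcon
        push_neg at hcon
        have h1 : ∑ l ∈ P, min (lam l) G = min (lam v) G + ∑ l ∈ P.erase v, min (lam l) G :=
          (Finset.add_sum_erase P _ hvP).symm
        have h2 : ∑ l ∈ P.erase v, min (lam l) G ≤ ((P.card - 1 : ℕ) : ℝ) * G := by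
          have h6 := Finset.sum_le_card_nsmul (P.erase v) (fun l => min (lam l) G) G
            (fun l _ => min_le_right _ _)
          rw [Finset.card_erase_of_mem hvP] at h6
          simpa [nsmul_eq_mul] using h6
        have h3 : min (lam v) G = lam v := min_eq_left (le_of_lt hcon)
        have hid2 : (α:ℝ) * G = ∑ l ∈ P, min (lam l) G := by rw [← hsplit, ← hid]
        have hcast : ((P.card - 1 : ℕ) : ℝ) = (α : ℝ) - 1 := by
          rw [hcardeq, Nat.cast_sub hα]
          simp
        rw [hcast] at h2
        have h7 : (α:ℝ) * G ≤ lam v + ((α:ℝ)-1)*G := by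
          rw [hid2, h1, h3]; linarith
        nlinarith
      linarith
    -- the solution: G on the set P
    have hPmem : P ∈ OmegaL L α := by
      rw [OmegaL, Finset.mem_powersetCard]
      exact ⟨Finset.subset_univ _, hcardeq⟩
    refine ⟨fun U => if U = P then G else 0, ?_, ?_, ?_, ?_⟩
    · intro U _; dsimp only; split_ifs <;> simp [hGnn]
    · intro U hU
      have : U ≠ P := fun h => hU (h ▸ hPmem)
      simp [this]
    · intro l
      rw [Finset.sum_ite_eq' ((OmegaL L α).filter (fun U => l ∈ U)) P (fun _ => G)]
      by_cases hl : l ∈ P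
      · rw [if_pos (Finset.mem_filter.2 ⟨hPmem, hl⟩)]
        rw [← hGdef, hGlev]
        exact (min_eq_right (hvle l hl)).symm
      · have hnot : P ∉ (OmegaL L α).filter (fun U => l ∈ U) :=
          fun hmem => hl (Finset.mem_filter.1 hmem).2
        rw [if_neg hnot]
        have hz : lam l = 0 := by
          simp only [hP, Finset.mem_filter, Finset.mem_univ, true_and, not_lt] at hl
          exact le_antisymm hl (hlam l)
        rw [← hGdef, hz, min_eq_left hGnn]
    · rw [Finset.sum_ite_eq' (OmegaL L α) P (fun _ => G), if_pos hPmem]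

end SMDC3

namespace SMDC4
open SMDC SMDC2 SMDC3

variable {L : ℕ} (lam : Fin L → ℝ)

/-- Main step: from a canonical solution at level `α+1`, build one at level `α`
    together with the chain inequality. -/
lemma step (hlam : ∀ l, 0 ≤ lam l) {α : ℕ} (hα : 1 ≤ α) (hαL : α ≤ L)
    {c' : Finset (Fin L) → ℝ} (hc' : Canon lam (α+1) c') :
    ∃ c, Canon lam α c ∧ ∀ g : Finset (Fin L) → ℝ, MTH L α g →
      ∑ V ∈ OmegaL L (α+1), c' V * g V ≤ ∑ U ∈ OmegaL L α, c U * g U := by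
  obtain ⟨h0', hz', hdeg', htot'⟩ := hc'
  by_cases hG'0 : Glev lam (α+1) = 0
  · -- degenerate: c' vanishes
    have hc'0 : ∀ V ∈ OmegaL L (α+1), c' V = 0 := by
      have hs : ∑ V ∈ OmegaL L (α+1), c' V = 0 := by rw [htot', hG'0]
      exact fun V hV => (Finset.sum_eq_zero_iff_of_nonneg h0').1 hs V hV
    obtain ⟨c, hc⟩ := canon_exists_of_deg lam hlam hα hαL hG'0
    refine ⟨c, hc, fun g hg => ?_⟩
    have h1 : ∑ V ∈ OmegaL L (α+1), c' V * g V = 0 :=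
      Finset.sum_eq_zero (fun V hV => by rw [hc'0 V hV, zero_mul])
    rw [h1]
    exact Finset.sum_nonneg (fun U hU => mul_nonneg (hc.1 U hU) (hg.1 U hU))
  · -- main case
    set G := Glev lam α with hGdef
    set G' := Glev lam (α+1) with hG'def
    have hG'nn : 0 ≤ G' := Glev_nonneg lam hlam (Nat.le_succ_of_le hα)
    have hG'pos : 0 < G' := lt_of_le_of_ne hG'nn (Ne.symm hG'0)
    have hGG' : G' ≤ G := Glev_antitone lam hlam hα
    have hGpos : 0 < G := lt_of_lt_of_le hG'pos hGG'
    set W := G / G' with hW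
    have hW1 : 1 ≤ W := (one_le_div hG'pos).2 hGG'
    set xt : Fin L → ℝ := fun x => max 1 (min (lam x) G / G') with hxt
    set u : Fin L → ℝ := fun x => W - xt x with hu
    have hxt1 : ∀ x, 1 ≤ xt x := fun x => le_max_left _ _
    have hxtleW : ∀ x, xt x ≤ W := by
      intro x
      refine max_le hW1 ?_
      exact div_le_div_of_nonneg_right (min_le_right _ _) hG'nn
    have hu0 : ∀ x, 0 ≤ u x := fun x => sub_nonneg.2 (hxtleW x)
    set K := Finset.univ.filter (fun x => G' < lam x) with hK
    have hxtK : ∀ x ∈ K, xt x = min (lam x) G / G' := by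
      intro x hx
      have hlx : G' < lam x := (Finset.mem_filter.1 hx).2
      refine max_eq_right ?_
      rw [le_div_iff₀ hG'pos, one_mul]
      exact le_min (le_of_lt hlx) hGG'
    have hxtnotK : ∀ x, x ∉ K → xt x = 1 := by
      intro x hx
      have hlx : lam x ≤ G' := by
        simp only [hK, Finset.mem_filter, Finset.mem_univ, true_and, not_lt] at hx
        exact hx
      refine max_eq_left ?_
      rw [div_le_one hG'pos]
      exact le_trans (min_le_left _ _) hlx
    -- water identities
    have wG : (α : ℝ) * G = ∑ l, min (lam l) G := Glev_eq lam hlam hα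
    have wG' : ((α:ℝ) + 1) * G' = ∑ l, min (lam l) G' := by
      have := Glev_eq lam hlam (Nat.le_succ_of_le hα)
      push_cast at this
      rw [← hG'def] at this
      exact this
    -- support of c' contains K
    have hsupp : ∀ l ∈ K, ∀ V ∈ OmegaL L (α+1), l ∉ V → c' V = 0 := by
      intro l hl V hV hlV
      have hmin : min (lam l) G' = G' := min_eq_right (le_of_lt (Finset.mem_filter.1 hl).2)
      have hsplit := Finset.sum_filter_add_sum_filter_not (OmegaL L (α+1))
        (fun V => l ∈ V) c'
      have h1 : ∑ V ∈ (OmegaL L (α+1)).filter (fun V => ¬ l ∈ V), c' V = 0 := by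
        have hd := hdeg' l
        rw [hmin] at hd
        rw [hd, htot'] at hsplit
        linarith
      have hmem : V ∈ (OmegaL L (α+1)).filter (fun V => ¬ l ∈ V) :=
        Finset.mem_filter.2 ⟨hV, hlV⟩
      exact (Finset.sum_eq_zero_iff_of_nonneg
        (fun V2 hV2 => h0' V2 (Finset.mem_of_mem_filter V2 hV2))).1 h1 V hmem
    -- sums over K
    have hsumnotK : ∑ l ∈ Finset.univ.filter (fun l => l ∉ K), lam l
        = ((α:ℝ)+1) * G' - (K.card : ℝ) * G' := by
      have hsplit := Finset.sum_filter_add_sum_filter_not (Finset.univ : Finset (Fin L))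
        (fun l => l ∈ K) (fun l => min (lam l) G')
      have e1 : ∑ l ∈ Finset.univ.filter (fun l => l ∈ K), min (lam l) G'
          = (K.card : ℝ) * G' := by
        have hKf : Finset.univ.filter (fun l => l ∈ K) = K := by
          ext l; simp [hK]
        rw [hKf]
        rw [Finset.sum_congr rfl (fun l hl =>
          min_eq_right (le_of_lt (Finset.mem_filter.1 hl).2))]
        rw [Finset.sum_const, nsmul_eq_mul]
      have e2 : ∑ l ∈ Finset.univ.filter (fun l => l ∉ K), min (lam l) G'
          = ∑ l ∈ Finset.univ.filter (fun l => l ∉ K), lam l := by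
        refine Finset.sum_congr rfl (fun l hl => ?_)
        have : lam l ≤ G' := by
          have := (Finset.mem_filter.1 hl).2
          simp only [hK, Finset.mem_filter, Finset.mem_univ, true_and, not_lt] at this
          exact this
        exact min_eq_left this
      rw [e1, e2] at hsplit
      rw [← wG'] at hsplit
      linarith
    have hsumK : ∑ l ∈ K, min (lam l) G
        = (α:ℝ)*G - ((α:ℝ)+1)*G' + (K.card : ℝ) * G' := by
      have hsplit := Finset.sum_filter_add_sum_filter_not (Finset.univ : Finset (Fin L))
        (fun l => l ∈ K) (fun l => min (lam l) G)
      have e1 : Finset.univ.filter (fun l => l ∈ K) = K := by ext l; simp [hK]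
      have e2 : ∑ l ∈ Finset.univ.filter (fun l => l ∉ K), min (lam l) G
          = ∑ l ∈ Finset.univ.filter (fun l => l ∉ K), lam l := by
        refine Finset.sum_congr rfl (fun l hl => ?_)
        have h3 : lam l ≤ G' := by
          have := (Finset.mem_filter.1 hl).2
          simp only [hK, Finset.mem_filter, Finset.mem_univ, true_and, not_lt] at this
          exact this
        exact min_eq_left (le_trans h3 hGG')
      rw [e1, e2, hsumnotK, ← wG] at hsplit
      linarith
    -- the crucial per-V identity
    have hVxt : ∀ V ∈ OmegaL L (α+1), c' V ≠ 0 → ∑ x ∈ V, xt x = (α:ℝ) * W := by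
      intro V hV hcV
      have hKV : K ⊆ V := by
        intro l hl
        by_contra hlV
        exact hcV (hsupp l hl V hV hlV)
      have hVcard : V.card = α + 1 := (Finset.mem_powersetCard.1 hV).2
      have hsdiff : ∑ x ∈ V \ K, xt x + ∑ x ∈ K, xt x = ∑ x ∈ V, xt x :=
        Finset.sum_sdiff hKV
      have e1 : ∑ x ∈ V \ K, xt x = ((V.card - K.card : ℕ) : ℝ) := by
        rw [Finset.sum_congr rfl (fun x hx => hxtnotK x (Finset.mem_sdiff.1 hx).2)]
        rw [Finset.sum_const, Finset.card_sdiff_of_subset hKV, nsmul_eq_mul, mul_one]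
      have e2 : ∑ x ∈ K, xt x = ((α:ℝ)*G - ((α:ℝ)+1)*G' + (K.card : ℝ) * G') / G' := by
        rw [Finset.sum_congr rfl (fun x hx => hxtK x hx), ← Finset.sum_div, hsumK]
      have hKcard : K.card ≤ α + 1 := by
        rw [← hVcard]
        exact Finset.card_le_card hKV
      have hcast : ((V.card - K.card : ℕ) : ℝ) = ((α:ℝ)+1) - (K.card : ℝ) := by
        rw [hVcard, Nat.cast_sub hKcard]
        push_cast
        ring
      rw [e1, e2, hcast] at hsdiff
      rw [← hsdiff, hW]
      field_simp
      ring
    -- cover sums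
    have hcov : ∀ V ∈ OmegaL L (α+1), c' V ≠ 0 → ∀ l ∈ V,
        ∑ x ∈ V.erase l, u x = xt l := by
      intro V hV hcV l hl
      have hVcard : V.card = α + 1 := (Finset.mem_powersetCard.1 hV).2
      have hsumV : ∑ x ∈ V, u x = W := by
        simp only [hu]
        rw [Finset.sum_sub_distrib, Finset.sum_const, hVcard, hVxt V hV hcV, nsmul_eq_mul]
        push_cast
        ring
      have := Finset.add_sum_erase V u hl
      rw [hsumV] at this
      simp only [hu] at this ⊢
      linarith
    -- definition of c
    set c : Finset (Fin L) → ℝ := fun U =>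
      if U ∈ OmegaL L α then ∑ x ∈ Finset.univ \ U, c' (insert x U) * u x else 0 with hc
    have hc0 : ∀ U ∈ OmegaL L α, 0 ≤ c U := by
      intro U hU
      simp only [hc, if_pos hU]
      refine Finset.sum_nonneg (fun x hx => ?_)
      by_cases hmem : insert x U ∈ OmegaL L (α+1)
      · exact mul_nonneg (h0' _ hmem) (hu0 x)
      · rw [hz' _ hmem, zero_mul]
    have hcz : ∀ U, U ∉ OmegaL L α → c U = 0 := by
      intro U hU; simp only [hc, if_neg hU]
    -- total
    have hctot : ∑ U ∈ OmegaL L α, c U = G := by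
      have h1 : ∑ U ∈ OmegaL L α, c U
          = ∑ U ∈ OmegaL L α, ∑ x ∈ Finset.univ \ U, c' (insert x U) * u x :=
        Finset.sum_congr rfl (fun U hU => by simp only [hc, if_pos hU])
      rw [h1, pair_reindex α (fun V x => c' V * u x)]
      have h2 : ∀ V ∈ OmegaL L (α+1), ∑ x ∈ V, c' V * u x = c' V * W := by
        intro V hV
        by_cases hcV : c' V = 0
        · simp [hcV]
        · rw [← Finset.mul_sum]
          congr 1
          have hVcard : V.card = α + 1 := (Finset.mem_powersetCard.1 hV).2
          simp only [hu]
          rw [Finset.sum_sub_distrib, Finset.sum_const, hVcard, hVxt V hV hcV, nsmul_eq_mul]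
          push_cast
          ring
      rw [Finset.sum_congr rfl h2, ← Finset.sum_mul, htot', hW]
      field_simp
    -- degrees
    have hcdeg : ∀ l, ∑ U ∈ (OmegaL L α).filter (fun U => l ∈ U), c U = min (lam l) G := by
      intro l
      have h1 : ∑ U ∈ (OmegaL L α).filter (fun U => l ∈ U), c U
          = ∑ U ∈ OmegaL L α, ∑ x ∈ Finset.univ \ U,
              (if l ∈ U then c' (insert x U) * u x else 0) := by
        rw [Finset.sum_filter]
        refine Finset.sum_congr rfl (fun U hU => ?_)
        by_cases hl : l ∈ U
        · simp only [if_pos hl, hc, if_pos hU]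
        · simp only [if_neg hl, Finset.sum_const_zero]
      have h2 : ∀ U ∈ OmegaL L α, ∀ x ∈ Finset.univ \ U,
          (if l ∈ U then c' (insert x U) * u x else 0)
            = (if l ∈ (insert x U).erase x then c' (insert x U) * u x else 0) := by
        intro U hU x hx
        have hxU : x ∉ U := (Finset.mem_sdiff.1 hx).2
        rw [Finset.erase_insert hxU]
      rw [Finset.sum_congr rfl (fun U hU => Finset.sum_congr rfl (fun x hx => h2 U hU x hx))] at h1
      rw [h1, pair_reindex α (fun V x => if l ∈ V.erase x then c' V * u x else 0)]
      have h3 : ∀ V ∈ OmegaL L (α+1), ∑ x ∈ V, (if l ∈ V.erase x then c' V * u x else 0)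
          = if l ∈ V then ∑ x ∈ V.erase l, c' V * u x else 0 := by
        intro V hV
        by_cases hl : l ∈ V
        · rw [if_pos hl, ← Finset.sum_filter]
          congr 1
          ext x
          simp only [Finset.mem_filter, Finset.mem_erase]
          constructor
          · rintro ⟨hxV, hlx, _⟩; exact ⟨Ne.symm hlx, hxV⟩
          · rintro ⟨hxl, hxV⟩; exact ⟨hxV, Ne.symm hxl, hl⟩
        · rw [if_neg hl]
          refine Finset.sum_eq_zero (fun x hx => ?_)
          rw [if_neg (fun hmem => hl (Finset.mem_of_mem_erase hmem))]
      rw [Finset.sum_congr rfl h3, ← Finset.sum_filter]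
      have h4 : ∀ V ∈ (OmegaL L (α+1)).filter (fun V => l ∈ V),
          ∑ x ∈ V.erase l, c' V * u x = c' V * xt l := by
        intro V hV
        obtain ⟨hVΩ, hlV⟩ := Finset.mem_filter.1 hV
        by_cases hcV : c' V = 0
        · simp [hcV]
        · rw [← Finset.mul_sum, hcov V hVΩ hcV l hlV]
      rw [Finset.sum_congr rfl h4, ← Finset.sum_mul]
      rw [hdeg' l]
      by_cases hl : l ∈ K
      · have hlx : G' < lam l := (Finset.mem_filter.1 hl).2
        rw [min_eq_right (le_of_lt hlx), hxtK l hl]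
        field_simp
      · have hlx : lam l ≤ G' := by
          simp only [hK, Finset.mem_filter, Finset.mem_univ, true_and, not_lt] at hl
          exact hl
        rw [min_eq_left hlx, hxtnotK l hl, mul_one]
        exact (min_eq_left (le_trans hlx hGG')).symm
    refine ⟨c, ⟨hc0, hcz, by rw [← hGdef]; exact hcdeg, by rw [← hGdef]; exact hctot⟩,
      fun g hg => ?_⟩
    -- chain inequality
    have h1 : ∑ U ∈ OmegaL L α, c U * g U
        = ∑ U ∈ OmegaL L α, ∑ x ∈ Finset.univ \ U,
            c' (insert x U) * u x * g ((insert x U).erase x) := by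
      refine Finset.sum_congr rfl (fun U hU => ?_)
      simp only [hc, if_pos hU]
      rw [Finset.sum_mul]
      refine Finset.sum_congr rfl (fun x hx => ?_)
      rw [Finset.erase_insert (Finset.mem_sdiff.1 hx).2]
    rw [h1, pair_reindex α (fun V x => c' V * u x * g (V.erase x))]
    refine Finset.sum_le_sum (fun V hV => ?_)
    by_cases hcV : c' V = 0
    · simp [hcV]
    · have hcVpos : 0 < c' V := lt_of_le_of_ne (h0' V hV) (Ne.symm hcV)
      have hgV := hg.2 V hV u hu0 (fun l hl => by
        rw [hcov V hV hcV l hl]; exact hxt1 l)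
      calc c' V * g V ≤ c' V * ∑ x ∈ V, u x * g (V.erase x) :=
            mul_le_mul_of_nonneg_left hgV (le_of_lt hcVpos)
        _ = ∑ x ∈ V, c' V * u x * g (V.erase x) := by
            rw [Finset.mul_sum]
            exact Finset.sum_congr rfl (fun x _ => by ring)

end SMDC4

namespace SMDC5
open SMDC SMDC2 SMDC3 SMDC4

variable {L : ℕ} (lam : Fin L → ℝ)

lemma chain_from (hlam : ∀ l, 0 ≤ lam l) :
    ∀ (k n : ℕ), n + k = L → 1 ≤ n →
    ∃ c : ℕ → Finset (Fin L) → ℝ,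
      (∀ β, n ≤ β → β ≤ L → Canon lam β (c β)) ∧
      (∀ β, n ≤ β → β + 1 ≤ L → ∀ g : Finset (Fin L) → ℝ, MTH L β g →
        ∑ V ∈ OmegaL L (β+1), c (β+1) V * g V ≤ ∑ U ∈ OmegaL L β, c β U * g U) := by
  intro k
  induction k with
  | zero =>
    intro n hn hn1
    simp only [Nat.add_zero] at hn
    subst hn
    refine ⟨fun _ => (fun U => if U = Finset.univ then Glev lam n else 0), ?_, ?_⟩
    · intro β hβ1 hβ2
      have : β = n := le_antisymm hβ2 hβ1
      subst this
      exact canon_top lam hlam hn1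
    · intro β hβ1 hβ2 g hg
      omega
  | succ k IH =>
    intro n hn hn1
    have hk : (n+1) + k = L := by omega
    obtain ⟨c, hcanon, hchain⟩ := IH (n+1) hk (by omega)
    have hcanon1 : Canon lam (n+1) (c (n+1)) := hcanon (n+1) le_rfl (by omega)
    obtain ⟨cn, hcn, hstep⟩ := step lam hlam hn1 (by omega) hcanon1
    refine ⟨fun β => if β = n then cn else c β, ?_, ?_⟩
    · intro β hβ1 hβ2
      by_cases hβ : β = n
      · subst hβ
        show Canon lam β (if β = β then cn else c β)
        rw [if_pos rfl]
        exact hcn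
      · have h1 : n + 1 ≤ β := by omega
        show Canon lam β (if β = n then cn else c β)
        rw [if_neg hβ]
        exact hcanon β h1 hβ2
    · intro β hβ1 hβ2 g hg
      by_cases hβ : β = n
      · subst hβ
        have hne : ¬ (β + 1 = β) := Nat.succ_ne_self β
        show ∑ V ∈ OmegaL L (β+1), (if β + 1 = β then cn else c (β+1)) V * g V ≤
             ∑ U ∈ OmegaL L β, (if β = β then cn else c β) U * g U
        rw [if_neg hne, if_pos rfl]
        exact hstep g hg
      · have h1 : n + 1 ≤ β := by omega
        have h2 : ¬ (β + 1 = n) := by omega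
        show ∑ V ∈ OmegaL L (β+1), (if β + 1 = n then cn else c (β+1)) V * g V ≤
             ∑ U ∈ OmegaL L β, (if β = n then cn else c β) U * g U
        rw [if_neg hβ, if_neg h2]
        exact hchain β h1 hβ2 g hg

lemma chain_exists (hlam : ∀ l, 0 ≤ lam l) (hL : 1 ≤ L) :
    ∃ c : ℕ → Finset (Fin L) → ℝ,
      (∀ β, 1 ≤ β → β ≤ L → Canon lam β (c β)) ∧
      (∀ β, 1 ≤ β → β + 1 ≤ L → ∀ g : Finset (Fin L) → ℝ, MTH L β g →
        ∑ V ∈ OmegaL L (β+1), c (β+1) V * g V ≤ ∑ U ∈ OmegaL L β, c β U * g U) :=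
  chain_from lam hlam (L - 1) 1 (by omega) le_rfl

lemma fLP_eq_Glev (hlam : ∀ l, 0 ≤ lam l) {α : ℕ} (hα : 1 ≤ α) (hαL : α ≤ L) :
    fLP L lam α = Glev lam α := by
  obtain ⟨c, hcanon, _⟩ := chain_exists lam hlam (le_trans hα hαL)
  obtain ⟨h0, hz, hdeg, htot⟩ := hcanon α hα hαL
  refine le_antisymm (fLP_le_Glev lam hlam hα) ?_
  refine Glev_le_fLP lam hlam hα h0 (fun l => ?_) htot
  rw [hdeg l]
  exact min_le_left _ _

end SMDC5

namespace SMDC6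
open SMDC MeasureTheory ProbabilityTheory Real

variable {Ω : Type*} [MeasurableSpace Ω] (μ : Measure Ω) [IsProbabilityMeasure μ]
variable {L : ℕ} {T : Fin L → Type*} [∀ i, Fintype (T i)] [∀ i, MeasurableSpace (T i)]
  [∀ i, MeasurableSingletonClass (T i)] {S : ∀ i, Ω → T i}

lemma entH_jointOn_empty : entH μ (jointOn S (∅ : Finset (Fin L))) = 0 := by
  rw [entH_eq]
  refine Finset.sum_eq_zero (fun s _ => ?_)
  have hpre : jointOn S (∅ : Finset (Fin L)) ⁻¹' {s} = Set.univ := by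
    ext ω
    simp only [Set.mem_preimage, Set.mem_singleton_iff, Set.mem_univ, iff_true]
    funext i
    exact (Finset.notMem_empty _ i.2).elim
  rw [pm, hpre, measure_univ]
  simp [Real.negMulLog]

lemma entH_jointOn_insert (hS : ∀ i, Measurable (S i))
    (hindep : iIndepFun S μ) (v : Fin L) (A : Finset (Fin L))
    (hv : v ∉ A) :
    entH μ (jointOn S (insert v A)) = entH μ (S v) + entH μ (jointOn S A) := by
  have hg : Function.Injective (fun f : ((i : (insert v A : Finset (Fin L))) → T i) =>
      (f ⟨v, Finset.mem_insert_self v A⟩,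
        (fun i : A => f ⟨i.1, Finset.mem_insert_of_mem i.2⟩))) := by
    intro f f' h
    simp only [Prod.mk.injEq] at h
    obtain ⟨h1, h2⟩ := h
    funext j
    rcases Finset.mem_insert.1 j.2 with hj | hj
    · have hje : j = ⟨v, Finset.mem_insert_self v A⟩ := Subtype.ext hj
      rw [hje]; exact h1
    · have hje : j = ⟨j.1, Finset.mem_insert_of_mem hj⟩ := Subtype.ext rfl
      rw [hje]; exact congrFun h2 ⟨j.1, hj⟩
  have h1 := entH_comp_inj μ (Y := jointOn S (insert v A)) _ hg
  have hInd : IndepFun (S v) (jointOn S A) μ := by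
    have hd : Disjoint ({v} : Finset (Fin L)) A := Finset.disjoint_singleton_left.2 hv
    have h2 := hindep.indepFun_finset {v} A hd hS
    have h3 := h2.comp (φ := fun f : ((i : ({v} : Finset (Fin L))) → T i) =>
        f ⟨v, Finset.mem_singleton_self v⟩) (ψ := id) (show Measurable (fun f : ((i : ({v} : Finset (Fin L))) → T i) => f ⟨v, Finset.mem_singleton_self v⟩) from measurable_pi_apply _) measurable_id
    exact h3
  have h4 := entH_pair_indep μ (hS v) (measurable_jointOn hS A) hInd
  calc entH μ (jointOn S (insert v A))
      = entH μ (fun ω => (S v ω, jointOn S A ω)) := h1.symm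
    _ = entH μ (S v) + entH μ (jointOn S A) := h4

lemma pre_succ_eq (n : ℕ) (hn : n < L) :
    pre L (n+1) = insert (⟨n, hn⟩ : Fin L) (pre L n) := by
  ext j
  simp only [pre, Finset.mem_filter, Finset.mem_univ, true_and, Finset.mem_insert, Fin.ext_iff]
  omega

lemma self_not_mem_pre (n : ℕ) (hn : n < L) : (⟨n, hn⟩ : Fin L) ∉ pre L n := by
  simp [pre]

lemma pre_zero_eq : pre L 0 = (∅ : Finset (Fin L)) := by
  ext j; simp [pre]

end SMDC6

/-- **Converse bound for classical SMDC along an arbitrary supporting hyperplane**: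
if `H(S_1,…,S_α | X_U) ≤ δ_α` for every `α ∈ {1,…,L}` and every `U ∈ Ω_L^{(α)}`, then
`∑_l λ_l H(X_l) ≥ ∑_α f_α(λ) H(S_α) − ∑_α f_α(λ) δ_α`.  Here the source index `i : Fin L`
corresponds to the paper's index `α = i + 1`. -/
theorem smdc_converse_hyperplane
    {Ω : Type*} [MeasurableSpace Ω] (μ : Measure Ω) [IsProbabilityMeasure μ]
    {L : ℕ} (hL : 1 ≤ L) (lam : Fin L → ℝ) (hlam : ∀ l, 0 ≤ lam l)
    {T : Fin L → Type*} [∀ i, Fintype (T i)] [∀ i, MeasurableSpace (T i)]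
    [∀ i, MeasurableSingletonClass (T i)]
    {V : Fin L → Type*} [∀ i, Fintype (V i)] [∀ i, MeasurableSpace (V i)]
    [∀ i, MeasurableSingletonClass (V i)]
    (S : ∀ i, Ω → T i) (hS : ∀ i, Measurable (S i))
    (hindep : iIndepFun S μ)
    (X : ∀ i, Ω → V i) (hX : ∀ i, Measurable (X i))
    (δ : Fin L → ℝ) (hδ : ∀ i, 0 ≤ δ i)
    (hrec : ∀ i : Fin L, ∀ U ∈ OmegaL L ((i : ℕ) + 1),
      condEntH μ (jointOn S (pre L ((i : ℕ) + 1))) (jointOn X U) ≤ δ i) :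
    ∑ l : Fin L, lam l * entH μ (X l) ≥
      ∑ i : Fin L, fLP L lam ((i : ℕ) + 1) * entH μ (S i) -
        ∑ i : Fin L, fLP L lam ((i : ℕ) + 1) * δ i := by
  classical
  obtain ⟨c, hcanon, hchain⟩ := SMDC5.chain_exists lam hlam hL
  -- per-set extraction inequality
  have hext : ∀ (i : Fin L) (n : ℕ), (i : ℕ) + 1 = n → ∀ Vs ∈ OmegaL L n,
      (entH μ (S i) - δ i) + SMDC.hf μ (X := X) (W := jointOn S (pre L n)) Vs ≤
      SMDC.hf μ (X := X) (W := jointOn S (pre L (n-1))) Vs := by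
    intro i n hiv Vs hVs
    have h1n : 1 ≤ n := by omega
    have hnL : n ≤ L := by omega
    have hins : pre L n = insert i (pre L (n-1)) := by
      have h2 := SMDC6.pre_succ_eq (L := L) (n-1) (by omega)
      have h3 : n - 1 + 1 = n := by omega
      rw [h3] at h2
      have h4 : (⟨n-1, by omega⟩ : Fin L) = i := by
        apply Fin.ext
        simp only
        omega
      rw [h4] at h2
      exact h2
    have hnm : i ∉ pre L (n-1) := by
      simp only [pre, Finset.mem_filter, Finset.mem_univ, true_and, not_lt]
      omega
    have hWsum : entH μ (jointOn S (pre L n)) =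
        entH μ (S i) + entH μ (jointOn S (pre L (n-1))) := by
      rw [hins]
      exact SMDC6.entH_jointOn_insert μ hS hindep i (pre L (n-1)) hnm
    have hmeasV : Measurable (jointOn X Vs) := SMDC.measurable_jointOn hX Vs
    have hWm : Measurable (jointOn S (pre L (n-1))) := SMDC.measurable_jointOn hS _
    have hb : entH μ (jointOn X Vs) ≤
        entH μ (fun ω => (jointOn X Vs ω, jointOn S (pre L (n-1)) ω)) :=
      SMDC.entH_comp_le μ (hmeasV.prodMk hWm) Prod.fst
    have hswap : entH μ (fun ω => (jointOn X Vs ω, jointOn S (pre L n) ω)) =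
        entH μ (fun ω => (jointOn S (pre L n) ω, jointOn X Vs ω)) :=
      (SMDC.entH_comp_inj μ (Y := fun ω => (jointOn X Vs ω, jointOn S (pre L n) ω))
        Prod.swap Prod.swap_injective).symm
    have hVs' : Vs ∈ OmegaL L ((i : ℕ)+1) := by rw [hiv]; exact hVs
    have hrec2 : entH μ (fun ω => (jointOn S (pre L ((i:ℕ)+1)) ω, jointOn X Vs ω)) -
        entH μ (jointOn X Vs) ≤ δ i := hrec i Vs hVs'
    rw [hiv] at hrec2
    simp only [SMDC.hf]
    have hup : entH μ (fun ω => (jointOn X Vs ω, jointOn S (pre L n) ω)) ≤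
        entH μ (jointOn X Vs) + δ i := by rw [hswap]; linarith
    linarith [hb, hup, hWsum]
  -- MT hypothesis for conditional entropies
  have hMTH : ∀ n : ℕ, SMDC3.MTH L n
      (fun U => SMDC.hf μ (X := X) (W := jointOn S (pre L n)) U) := by
    intro n
    constructor
    · intro U _
      exact SMDC.hf_nonneg μ hX (SMDC.measurable_jointOn hS _) U
    · intro Vs hVs u hu hcov
      have h := SMDC.hf_cover μ (W := jointOn S (pre L n)) hX
        (SMDC.measurable_jointOn hS _) Vs u hu 1 zero_le_one hcov
      rw [one_mul] at h
      exact h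
  -- extraction summed over a level
  have hstep_sum : ∀ (i : Fin L) (n : ℕ), (i : ℕ) + 1 = n →
      SMDC.Glev lam n * (entH μ (S i) - δ i) +
        ∑ Vs ∈ OmegaL L n, c n Vs * SMDC.hf μ (X := X) (W := jointOn S (pre L n)) Vs ≤
      ∑ Vs ∈ OmegaL L n, c n Vs * SMDC.hf μ (X := X) (W := jointOn S (pre L (n-1))) Vs := by
    intro i n hiv
    have h1n : 1 ≤ n := by omega
    have hnL : n ≤ L := by omega
    obtain ⟨h0, hz, hdeg, htot⟩ := hcanon n h1n hnL
    have hper : ∀ Vs ∈ OmegaL L n,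
        c n Vs * ((entH μ (S i) - δ i) +
          SMDC.hf μ (X := X) (W := jointOn S (pre L n)) Vs) ≤
        c n Vs * SMDC.hf μ (X := X) (W := jointOn S (pre L (n-1))) Vs := by
      intro Vs hVs
      exact mul_le_mul_of_nonneg_left (hext i n hiv Vs hVs) (h0 Vs hVs)
    have hsum := Finset.sum_le_sum hper
    have he : ∀ Vs ∈ OmegaL L n,
        c n Vs * ((entH μ (S i) - δ i) +
          SMDC.hf μ (X := X) (W := jointOn S (pre L n)) Vs) =
        c n Vs * (entH μ (S i) - δ i) +
          c n Vs * SMDC.hf μ (X := X) (W := jointOn S (pre L n)) Vs :=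
      fun Vs _ => by ring
    rw [Finset.sum_congr rfl he, Finset.sum_add_distrib, ← Finset.sum_mul, htot] at hsum
    linarith
  -- main downward induction
  have hAA : ∀ m n, n + m = L → 1 ≤ n →
      ∑ i ∈ Finset.univ.filter (fun i : Fin L => n ≤ (i:ℕ)+1),
        SMDC.Glev lam ((i:ℕ)+1) * (entH μ (S i) - δ i) ≤
      ∑ U ∈ OmegaL L n, c n U * SMDC.hf μ (X := X) (W := jointOn S (pre L (n-1))) U := by
    intro m
    induction m with
    | zero =>
      intro n hn h1n
      simp only [Nat.add_zero] at hn
      obtain ⟨iL, hiL⟩ : ∃ i : Fin L, (i:ℕ)+1 = n := ⟨⟨n-1, by omega⟩, by simp; omega⟩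
      have hfil : Finset.univ.filter (fun i : Fin L => n ≤ (i:ℕ)+1) = {iL} := by
        ext j
        simp only [Finset.mem_filter, Finset.mem_univ, true_and, Finset.mem_singleton,
          Fin.ext_iff]
        omega
      rw [hfil, Finset.sum_singleton, hiL]
      have h1 := hstep_sum iL n hiL
      obtain ⟨h0, hz, hdeg, htot⟩ := hcanon n h1n (by omega)
      have h2 : 0 ≤ ∑ Vs ∈ OmegaL L n, c n Vs *
          SMDC.hf μ (X := X) (W := jointOn S (pre L n)) Vs :=
        Finset.sum_nonneg (fun Vs hVs => mul_nonneg (h0 Vs hVs)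
          (SMDC.hf_nonneg μ hX (SMDC.measurable_jointOn hS _) Vs))
      linarith
    | succ m IH =>
      intro n hn h1n
      have hn1L : n + 1 ≤ L := by omega
      have hIH := IH (n+1) (by omega) (by omega)
      have hchainn := hchain n h1n hn1L
        (fun U => SMDC.hf μ (X := X) (W := jointOn S (pre L n)) U) (hMTH n)
      obtain ⟨ii, hii⟩ : ∃ i : Fin L, (i:ℕ)+1 = n := ⟨⟨n-1, by omega⟩, by simp; omega⟩
      have hfil : Finset.univ.filter (fun i : Fin L => n ≤ (i:ℕ)+1) =
          insert ii (Finset.univ.filter (fun i : Fin L => n+1 ≤ (i:ℕ)+1)) := by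
        ext j
        simp only [Finset.mem_filter, Finset.mem_univ, true_and, Finset.mem_insert,
          Fin.ext_iff]
        omega
      have hnm : ii ∉ Finset.univ.filter (fun i : Fin L => n+1 ≤ (i:ℕ)+1) := by
        simp only [Finset.mem_filter, Finset.mem_univ, true_and, not_le]
        omega
      rw [hfil, Finset.sum_insert hnm, hii]
      have hred : n + 1 - 1 = n := rfl
      rw [hred] at hIH
      have h1 := hstep_sum ii n hii
      linarith
  have hmain := hAA (L-1) 1 (by omega) le_rfl
  -- level-1 identification
  have hsing : ∀ l : Fin L,
      SMDC.hf μ (X := X) (W := jointOn S (pre L 0)) ({l} : Finset (Fin L)) = entH μ (X l) := by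
    intro l
    have hW0 : entH μ (jointOn S (pre L 0)) = 0 := by
      rw [SMDC6.pre_zero_eq]
      exact SMDC6.entH_jointOn_empty μ
    have hg : Function.Injective
        (fun p : ((i : ({l} : Finset (Fin L))) → V i) × ((i : pre L 0) → T i) =>
          p.1 ⟨l, Finset.mem_singleton_self l⟩) := by
      rintro ⟨f, w⟩ ⟨f', w'⟩ h
      simp only at h
      refine Prod.ext ?_ ?_
      · funext j
        have hje : j = ⟨l, Finset.mem_singleton_self l⟩ :=
          Subtype.ext (Finset.mem_singleton.1 j.2)
        rw [hje]; exact h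
      · funext j
        exact absurd j.2 (by simp [pre])
    have h1 := SMDC.entH_comp_inj μ
      (Y := fun ω => (jointOn X ({l} : Finset (Fin L)) ω, jointOn S (pre L 0) ω)) _ hg
    simp only [SMDC.hf]
    rw [hW0, sub_zero, ← h1]
    rfl
  have hc1 : ∀ l : Fin L, c 1 {l} ≤ lam l := by
    intro l
    obtain ⟨h0, hz, hdeg, htot⟩ := hcanon 1 le_rfl hL
    have hmem : ({l} : Finset (Fin L)) ∈ (OmegaL L 1).filter (fun U => l ∈ U) := by
      refine Finset.mem_filter.2 ⟨?_, Finset.mem_singleton_self l⟩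
      rw [OmegaL, Finset.mem_powersetCard]
      exact ⟨Finset.subset_univ _, Finset.card_singleton l⟩
    have h1 : c 1 {l} ≤ ∑ U ∈ (OmegaL L 1).filter (fun U => l ∈ U), c 1 U :=
      Finset.single_le_sum (fun U hU => h0 U (Finset.mem_of_mem_filter U hU)) hmem
    rw [hdeg l] at h1
    exact le_trans h1 (min_le_left _ _)
  have hconv : ∑ U ∈ OmegaL L 1, c 1 U *
      SMDC.hf μ (X := X) (W := jointOn S (pre L (1-1))) U ≤
      ∑ l : Fin L, lam l * entH μ (X l) := by
    have hone : OmegaL L 1 =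
        Finset.univ.map ⟨singleton, Finset.singleton_injective⟩ := by
      rw [OmegaL, Finset.powersetCard_one]
    rw [hone, Finset.sum_map]
    simp only [Function.Embedding.coeFn_mk]
    refine Finset.sum_le_sum (fun l _ => ?_)
    have h2 : SMDC.hf μ (X := X) (W := jointOn S (pre L (1-1))) ({l} : Finset (Fin L))
        = entH μ (X l) := hsing l
    rw [h2]
    exact mul_le_mul_of_nonneg_right (hc1 l) (SMDC.entH_nonneg μ (X l))
  have hfilone : Finset.univ.filter (fun i : Fin L => 1 ≤ (i:ℕ)+1) =
      (Finset.univ : Finset (Fin L)) := by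
    ext j; simp
  rw [hfilone] at hmain
  -- convert fLP to Glev and finish
  have hflp : ∀ i : Fin L, fLP L lam ((i:ℕ)+1) = SMDC.Glev lam ((i:ℕ)+1) := by
    intro i
    exact SMDC5.fLP_eq_Glev lam hlam (by omega) i.isLt
  have hrhs : ∑ i : Fin L, fLP L lam ((i : ℕ) + 1) * entH μ (S i) -
      ∑ i : Fin L, fLP L lam ((i : ℕ) + 1) * δ i =
      ∑ i : Fin L, SMDC.Glev lam ((i:ℕ)+1) * (entH μ (S i) - δ i) := by
    rw [← Finset.sum_sub_distrib]
    refine Finset.sum_congr rfl (fun i _ => ?_)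
    rw [hflp i]
    ring
  rw [ge_iff_le, hrhs]
  calc ∑ i : Fin L, SMDC.Glev lam ((i:ℕ)+1) * (entH μ (S i) - δ i)
      ≤ ∑ U ∈ OmegaL L 1, c 1 U *
          SMDC.hf μ (X := X) (W := jointOn S (pre L (1-1))) U := hmain
    _ ≤ ∑ l : Fin L, lam l * entH μ (X l) := hconv
end
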